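/- arXiv:1111.2768 — 5 statements merged into one kernel-verified Lean document; each statement's English description precedes it below -/
import Mathlib

section
/- Let K = ⟨S, s_in, R, L⟩ be a finite Kripke structure, θ₁ a graded-CTL formula, and k ≥ 0. Let G be the directed graph whose vertices are the states of K satisfying E^{>0}Gθ₁ and whose edges are the transitions of R between such states. Then for every state s satisfying E^{>0}Gθ₁: (K,s) ⊨ E^{>k}Gθ₁ if and only if in G either a non-sink-cycle is reachable from s, or there exist k+1 pairwise distinct finite paths connecting s to sink-cycles. -/
/-- A Kripke structure over atomic propositions `AP` with state type `S`:
an initial state, a total transition relation, and a labeling. -/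
structure Kripke (S AP : Type) where
  init : S
  R : S → S → Prop
  total : ∀ s, ∃ t, R s t
  L : S → Set AP

namespace Kripke

variable {S AP : Type}

/-- A finite path: a nonempty list of states with consecutive states related by `R`. -/
def IsFinPath (K : Kripke S AP) (l : List S) : Prop :=
  l ≠ [] ∧ l.Chain' K.R

/-- Two finite paths (as lists) are distinct if they differ at some common index. -/
def FinDistinct (l₁ l₂ : List S) : Prop :=
  ∃ (i : ℕ) (h₁ : i < l₁.length) (h₂ : i < l₂.length), l₁[i] ≠ l₂[i]

/-- An infinite path: a function `ℕ → S` with consecutive states related by `R`. -/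
def IsInfPath (K : Kripke S AP) (π : ℕ → S) : Prop :=
  ∀ n, K.R (π n) (π (n + 1))

/-- Two infinite paths are distinct if they differ at some index. -/
def InfDistinct (π₁ π₂ : ℕ → S) : Prop :=
  ∃ i, π₁ i ≠ π₂ i

end Kripke

/-- Graded-CTL formulas: atoms, negation, conjunction and graded modalities
`E^{>k}Xψ`, `E^{>k}Gψ`, `E^{>k}(ψ₁Uψ₂)`. -/
inductive GCTL (AP : Type) : Type where
  | atom : AP → GCTL AP
  | not  : GCTL AP → GCTL AP
  | and  : GCTL AP → GCTL AP → GCTL AP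
  | EX   : ℕ → GCTL AP → GCTL AP
  | EG   : ℕ → GCTL AP → GCTL AP
  | EU   : ℕ → GCTL AP → GCTL AP → GCTL AP

namespace Kripke

variable {S AP : Type}

/-- Satisfaction of a graded-CTL formula at a state.  `E^{>k}θ` holds iff there are
`k+1` pairwise distinct evidences of the path formula `θ`. -/
def sat (K : Kripke S AP) : GCTL AP → S → Prop
  | .atom p, s => p ∈ K.L s
  | .not φ, s => ¬ K.sat φ s
  | .and φ ψ, s => K.sat φ s ∧ K.sat ψ s
  | .EX k φ, s =>
      ∃ e : Fin (k + 1) → List S,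
        (∀ i, ∃ t, e i = [s, t] ∧ K.R s t ∧ K.sat φ t) ∧
        (∀ i j, i ≠ j → FinDistinct (e i) (e j))
  | .EG k φ, s =>
      ∃ e : Fin (k + 1) → (ℕ → S),
        (∀ i, e i 0 = s ∧ K.IsInfPath (e i) ∧ ∀ n, K.sat φ (e i n)) ∧
        (∀ i j, i ≠ j → InfDistinct (e i) (e j))
  | .EU k φ ψ, s =>
      ∃ e : Fin (k + 1) → List S,
        (∀ i, (e i) ≠ [] ∧ (e i).Chain' K.R ∧ (e i).head? = some s ∧
          (∃ t, (e i).getLast? = some t ∧ K.sat ψ t) ∧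
          (∀ (m : ℕ) (h : m + 1 < (e i).length), K.sat φ ((e i)[m]))) ∧
        (∀ i j, i ≠ j → FinDistinct (e i) (e j))

end Kripke

section Digraph

variable {V : Type}

/-- Out-degree at least 2: two different successors. -/
def OutDegGeTwo (R : V → V → Prop) (v : V) : Prop :=
  ∃ t₁ t₂, t₁ ≠ t₂ ∧ R v t₁ ∧ R v t₂

/-- Out-degree exactly one: a unique successor. -/
def OutDegOne (R : V → V → Prop) (v : V) : Prop :=
  ∃! t, R v t

/-- A (simple) cycle: a nonempty duplicate-free list, consecutive vertices related by `R`,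
and an edge from the last vertex back to the first. -/
def IsCycle (R : V → V → Prop) (l : List V) : Prop :=
  l ≠ [] ∧ l.Nodup ∧ l.Chain' R ∧
    ∃ a b, l.head? = some a ∧ l.getLast? = some b ∧ R b a

/-- A sink-cycle: a cycle all of whose vertices have out-degree 1. -/
def IsSinkCycle (R : V → V → Prop) (l : List V) : Prop :=
  IsCycle R l ∧ ∀ v ∈ l, OutDegOne R v

/-- A non-sink-cycle: a cycle containing a vertex of out-degree at least 2. -/
def IsNonSinkCycle (R : V → V → Prop) (l : List V) : Prop :=
  IsCycle R l ∧ ∃ v ∈ l, OutDegGeTwo R v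

end Digraph

/-- The edge relation of the directed graph `G` induced by the states of `K`
satisfying `E^{>0}Gθ₁`, with the transitions of `R` between such states. -/
def inducedG {S AP : Type} (K : Kripke S AP) (θ₁ : GCTL AP) : S → S → Prop :=
  fun a b => K.R a b ∧ K.sat (.EG 0 θ₁) a ∧ K.sat (.EG 0 θ₁) b


namespace Claim1

variable {S : Type} {G : S → S → Prop}

/-- Follow the finite list `l`, then the infinite path `π` (which should start
at the last element of `l`). -/
def glue (l : List S) (π : ℕ → S) : ℕ → S :=
  fun n => if h : n < l.length - 1 then l[n]'(by omega) else π (n - (l.length - 1))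

lemma glue_ge {l : List S} {π : ℕ → S} {n : ℕ} (h : l.length - 1 ≤ n) :
    glue l π n = π (n - (l.length - 1)) := dif_neg (by omega)

lemma glue_get {l : List S} {π : ℕ → S} (h0 : l.getLast? = some (π 0))
    {n : ℕ} (h : n < l.length) : glue l π n = l[n] := by
  by_cases h' : n < l.length - 1
  · exact dif_pos h'
  · have hl : l ≠ [] := by rintro rfl; simp at h
    rw [List.getLast?_eq_getLast hl, List.getLast_eq_getElem] at h0
    have hn : n = l.length - 1 := by omega
    subst hn
    rw [glue_ge (by omega), Nat.sub_self, ← Option.some_inj.mp h0]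

lemma glue_path {l : List S} {π : ℕ → S} (hc : l.Chain' G)
    (hπ : ∀ n, G (π n) (π (n + 1))) (h0 : l.getLast? = some (π 0)) :
    ∀ n, G (glue l π n) (glue l π (n + 1)) := by
  intro n
  by_cases h : n + 1 < l.length
  · rw [glue_get h0 (by omega), glue_get h0 h]
    simpa using List.isChain_iff_getElem.mp hc n (by omega)
  · rw [glue_ge (by omega), glue_ge (by omega),
      show n + 1 - (l.length - 1) = (n - (l.length - 1)) + 1 by omega]
    exact hπ _

/-- One step of path extension. -/
noncomputable def extStep (hsucc : ∀ a b, G a b → ∃ c, G b c) :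
    {p : S × S // G p.1 p.2} → {p : S × S // G p.1 p.2} :=
  fun p => ⟨(p.1.2, Classical.choose (hsucc p.1.1 p.1.2 p.2)),
    Classical.choose_spec (hsucc p.1.1 p.1.2 p.2)⟩

/-- An infinite path starting at `a`, whose second vertex is `b`. -/
noncomputable def extPath (hsucc : ∀ a b, G a b → ∃ c, G b c)
    {a b : S} (h : G a b) : ℕ → S :=
  fun n => ((extStep hsucc)^[n] ⟨(a, b), h⟩).1.1

lemma extPath_zero (hsucc : ∀ a b, G a b → ∃ c, G b c) {a b : S} (h : G a b) :
    extPath hsucc h 0 = a := rfl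

lemma extPath_one (hsucc : ∀ a b, G a b → ∃ c, G b c) {a b : S} (h : G a b) :
    extPath hsucc h 1 = b := rfl

lemma extPath_path (hsucc : ∀ a b, G a b → ∃ c, G b c) {a b : S} (h : G a b) :
    ∀ n, G (extPath hsucc h n) (extPath hsucc h (n + 1)) := by
  intro n
  show G ((extStep hsucc)^[n] ⟨(a, b), h⟩).1.1 ((extStep hsucc)^[n+1] ⟨(a, b), h⟩).1.1
  rw [Function.iterate_succ_apply']
  exact ((extStep hsucc)^[n] ⟨(a, b), h⟩).2

lemma cycle_out_edge {l : List S} (hc : IsCycle G l) {v : S} (hv : v ∈ l) :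
    ∃ w, w ∈ l ∧ G v w := by
  obtain ⟨hne, hnd, hch, a, b, ha, hb, hba⟩ := hc
  obtain ⟨i, hi, rfl⟩ := List.mem_iff_getElem.mp hv
  by_cases h : i + 1 < l.length
  · exact ⟨l[i+1], List.getElem_mem _, by simpa using List.isChain_iff_getElem.mp hch i (by omega)⟩
  · have hi' : i = l.length - 1 := by omega
    rw [List.getLast?_eq_getLast hne, List.getLast_eq_getElem] at hb
    rw [List.head?_eq_head hne] at ha
    have hbv : b = l[i] := by subst hi'; exact (Option.some_inj.mp hb).symm
    refine ⟨a, ?_, by rw [← hbv]; exact hba⟩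
    rw [← Option.some_inj.mp ha]
    exact List.head_mem hne

lemma sink_succ {l : List S} (hs : IsSinkCycle G l) {v w : S} (hv : v ∈ l) (hvw : G v w) :
    w ∈ l := by
  obtain ⟨w', hw', hvw'⟩ := cycle_out_edge hs.1 hv
  obtain ⟨t, _, hun⟩ := hs.2 v hv
  rwa [hun w hvw, ← hun w' hvw']

lemma sink_det {C : List S} (hC : IsSinkCycle G C) {π₁ π₂ : ℕ → S}
    (h₁ : ∀ n, G (π₁ n) (π₁ (n + 1))) (h₂ : ∀ n, G (π₂ n) (π₂ (n + 1)))
    (h0 : π₁ 0 = π₂ 0) (hm : π₁ 0 ∈ C) : ∀ n, π₁ n = π₂ n := by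
  have key : ∀ n, π₁ n = π₂ n ∧ π₁ n ∈ C := by
    intro n
    induction n with
    | zero => exact ⟨h0, hm⟩
    | succ n ih =>
      obtain ⟨heq, hmem⟩ := ih
      obtain ⟨t, _, hun⟩ := hC.2 _ hmem
      refine ⟨?_, sink_succ hC hmem (h₁ n)⟩
      rw [hun _ (h₁ n), ← hun _ (show G (π₁ n) (π₂ (n+1)) by rw [heq]; exact h₂ n)]
  exact fun n => (key n).1

lemma chain'_reach {l : List S} (hc : l.Chain' G) :
    ∀ (i j : ℕ) (hij : i ≤ j) (hj : j < l.length),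
      Relation.ReflTransGen G (l[i]'(by omega)) (l[j]'hj) := by
  intro i j hij hj
  induction j with
  | zero =>
    have : i = 0 := by omega
    subst this; exact .refl
  | succ j ih =>
    rcases Nat.eq_or_lt_of_le hij with rfl | h
    · exact .refl
    · exact (ih (by omega) (by omega)).tail
        (by simpa using List.isChain_iff_getElem.mp hc j (by omega))

lemma cycle_reach {l : List S} (hc : IsCycle G l) {a b : S} (ha : a ∈ l) (hb : b ∈ l) :
    Relation.ReflTransGen G a b := by
  obtain ⟨hne, hnd, hch, x, y, hx, hy, hyx⟩ := hc
  obtain ⟨i, hi, rfl⟩ := List.mem_iff_getElem.mp ha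
  obtain ⟨j, hj, rfl⟩ := List.mem_iff_getElem.mp hb
  rw [List.head?_eq_head hne] at hx
  rw [List.getLast?_eq_getLast hne, List.getLast_eq_getElem] at hy
  have hx' : x = l[0]'(by omega) := by
    rw [← Option.some_inj.mp hx, List.getElem_zero]
  have hy' : y = l[l.length - 1]'(by omega) := (Option.some_inj.mp hy).symm
  have h1 : Relation.ReflTransGen G (l[i]) (l[l.length - 1]'(by omega)) :=
    chain'_reach hch i (l.length - 1) (by omega) (by omega)
  have h2 : Relation.ReflTransGen G (l[0]'(by omega)) (l[j]) :=
    chain'_reach hch 0 j (by omega) hj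
  exact (h1.tail (by rw [← hx', ← hy']; exact hyx)).trans h2

lemma reach_list {a b : S} (h : Relation.ReflTransGen G a b) :
    ∃ l : List S, l ≠ [] ∧ l.Chain' G ∧ l.head? = some a ∧ l.getLast? = some b := by
  induction h with
  | refl => exact ⟨[a], by simp, List.isChain_singleton a, by simp, by simp⟩
  | @tail b c h₁ h₂ ih =>
    obtain ⟨l, hne, hch, hhd, hlst⟩ := ih
    refine ⟨l ++ [c], by simp, ?_, ?_, by simp⟩
    · show List.IsChain G _
      rw [List.isChain_append]
      refine ⟨hch, List.isChain_singleton _, fun x hx y hy => ?_⟩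
      simp at hy; subst hy
      rw [hlst] at hx; simp at hx; subst hx
      exact h₂
    · rcases l with _ | ⟨z, l⟩
      · simp at hne
      · simpa using hhd

lemma path_reach {π : ℕ → S} (hπ : ∀ n, G (π n) (π (n + 1))) (n : ℕ) :
    Relation.ReflTransGen G (π 0) (π n) := by
  induction n with
  | zero => exact .refl
  | succ n ih => exact ih.tail (hπ n)

lemma path_reach' {π : ℕ → S} (hπ : ∀ n, G (π n) (π (n + 1))) (n : ℕ) :
    Relation.ReflTransGen G (π 0) (π n) := by
  induction n with
  | zero => exact .refl
  | succ n ih => exact ih.tail (hπ n)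

lemma range_map_head? (f : ℕ → S) (n : ℕ) :
    ((List.range (n + 1)).map f).head? = some (f 0) := by
  rw [List.range_succ_eq_map]; simp

lemma range_map_getLast? (f : ℕ → S) (n : ℕ) :
    ((List.range (n + 1)).map f).getLast? = some (f n) := by
  rw [List.range_succ]; simp

lemma range_map_getElem (f : ℕ → S) {n m : ℕ} (h : m < n) :
    ((List.range n).map f)[m]'(by simpa using h) = f m := by simp

lemma range_map_chain' (f : ℕ → S) (hf : ∀ m, G (f m) (f (m + 1))) (n : ℕ) :
    ((List.range n).map f).Chain' G := by
  show List.IsChain G _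
  rw [List.isChain_iff_getElem]
  intro i h
  simp only [List.length_map, List.length_range] at h
  simp only [List.get_eq_getElem, List.getElem_map, List.getElem_range]
  exact hf i

/-- From any infinite path, either a non-sink-cycle is reachable from its start,
or the path hits a sink-cycle. -/
lemma exists_sink_or_nonsink [Fintype S] {π : ℕ → S} (hπ : ∀ n, G (π n) (π (n + 1))) :
    (∃ l v, IsNonSinkCycle G l ∧ v ∈ l ∧ Relation.ReflTransGen G (π 0) v) ∨
    (∃ n C, IsSinkCycle G C ∧ π n ∈ C) := by
  classical
  have hQ : ∃ d, 0 < d ∧ ∃ a, π (a + d) = π a := by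
    obtain ⟨x, y, hxy, hfx⟩ := Finite.exists_ne_map_eq_of_infinite π
    rcases Nat.lt_or_ge x y with h | h
    · exact ⟨y - x, by omega, x, by rw [show x + (y - x) = y by omega]; exact hfx.symm⟩
    · exact ⟨x - y, by omega, y, by rw [show y + (x - y) = x by omega]; exact hfx⟩
  obtain ⟨hdpos, a, hper⟩ := Nat.find_spec hQ
  set d := Nat.find hQ with hd
  set f : ℕ → S := fun m => π (a + m) with hfdef
  have hf : ∀ m, G (f m) (f (m + 1)) := fun m => by
    simpa [hfdef, show a + (m + 1) = (a + m) + 1 by omega] using hπ (a + m)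
  set C : List S := (List.range d).map f with hC
  have hlen : C.length = d := by simp [hC]
  have hne : C ≠ [] := by
    rw [← List.length_pos_iff] at *; omega
  have hmemf : ∀ m, m < d → f m ∈ C := by
    intro m hm; rw [hC]; exact List.mem_map_of_mem (List.mem_range.mpr hm)
  have hnd : C.Nodup := by
    refine List.Nodup.map_on ?_ List.nodup_range
    intro x hx y hy hxy
    simp only [List.mem_range] at hx hy
    by_contra hne'
    rcases Nat.lt_or_ge x y with h | h
    · exact Nat.find_min hQ (show y - x < d by omega)
        ⟨by omega, a + x, by rw [show a + x + (y - x) = a + y by omega, hfdef] at *; exact hxy.symm⟩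
    · have h' : y < x := by omega
      exact Nat.find_min hQ (show x - y < d by omega)
        ⟨by omega, a + y, by rw [show a + y + (x - y) = a + x by omega, hfdef] at *; exact hxy⟩
  have hcyc : IsCycle G C := by
    refine ⟨hne, hnd, range_map_chain' f hf d, f 0, f (d - 1), ?_, ?_, ?_⟩
    · rw [hC, show d = (d - 1) + 1 by omega]; exact range_map_head? f (d - 1)
    · rw [hC, show d = (d - 1) + 1 by omega]; exact range_map_getLast? f (d - 1)
    · have := hπ (a + (d - 1))
      rw [show a + (d - 1) + 1 = a + d by omega] at this
      rw [hfdef]; simp only []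
      rw [show a + 0 = a by omega, ← hper]
      exact this
  by_cases hbr : ∃ v ∈ C, OutDegGeTwo G v
  · obtain ⟨v, hv, hdeg⟩ := hbr
    obtain ⟨m, hm, rfl⟩ := List.mem_iff_getElem.mp hv
    refine Or.inl ⟨C, _, ⟨hcyc, _, hv, hdeg⟩, hv, ?_⟩
    have hh : C[m] = f m := by
      simp only [hC, List.getElem_map, List.getElem_range]
    rw [hh]
    exact path_reach' hπ (a + m)
  · push_neg at hbr
    refine Or.inr ⟨a, C, ⟨hcyc, ?_⟩, ?_⟩
    · intro v hv
      have hedge : ∃ w, G v w := by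
        obtain ⟨m, hm, rfl⟩ := List.mem_iff_getElem.mp hv
        rw [hlen] at hm
        have hvm : C[m]'(by omega) = f m := by
          simp only [hC, List.getElem_map, List.getElem_range]
        exact ⟨f (m + 1), by rw [hvm]; exact hf m⟩
      obtain ⟨w, hw⟩ := hedge
      exact ⟨w, hw, fun y hy => by
        by_contra hne'
        exact hbr v hv ⟨y, w, hne', hy, hw⟩⟩
    · exact hmemf 0 hdpos
/-- Iterated gluing of copies of a loop in front of a base infinite path. -/
noncomputable def iterGlue (loop : List S) (base : ℕ → S) : ℕ → (ℕ → S)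
  | 0 => base
  | i + 1 => glue loop (iterGlue loop base i)

lemma nonsink_paths (hsucc : ∀ a b : S, G a b → ∃ c, G b c) {s v : S} {l : List S}
    (h : IsNonSinkCycle G l) (hvl : v ∈ l) (hreach : Relation.ReflTransGen G s v) (k : ℕ) :
    ∃ e : Fin (k + 1) → (ℕ → S),
      (∀ i, e i 0 = s ∧ ∀ n, G (e i n) (e i (n + 1))) ∧
      (∀ i j, i ≠ j → Kripke.InfDistinct (e i) (e j)) := by
  obtain ⟨hcyc, w, hwl, t₁, t₂, ht12, hwt₁, hwt₂⟩ := h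
  obtain ⟨c, hcl, hwc⟩ := cycle_out_edge hcyc hwl
  have creach : Relation.ReflTransGen G c w := cycle_reach hcyc hcl hwl
  -- pick a successor of w different from c
  obtain ⟨d, hwd, hdc⟩ : ∃ d, G w d ∧ d ≠ c := by
    by_cases h1 : t₁ = c
    · exact ⟨t₂, hwt₂, by rw [← h1]; exact ht12.symm⟩
    · exact ⟨t₁, hwt₁, h1⟩
  obtain ⟨lc, hlcne, hlcch, hlchd, hlclast⟩ := reach_list creach
  set loop : List S := w :: lc with hloopdef
  have hloopne : loop ≠ [] := by simp [hloopdef]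
  have hloopch : loop.Chain' G := by
    rw [hloopdef]
    show List.IsChain G _
    rw [List.isChain_cons]
    exact ⟨fun y hy => by rw [hlchd] at hy; simp at hy; subst hy; exact hwc, hlcch⟩
  have hlooplast : loop.getLast? = some w := by
    rcases lc with _ | ⟨z, lc'⟩
    · simp at hlcne
    · rw [hloopdef, List.getLast?_cons_cons]; exact hlclast
  have hlooplen : 2 ≤ loop.length := by
    rw [hloopdef]
    have := List.length_pos_iff.mpr hlcne
    simp; omega
  have hloop1 : loop[1]'(by omega) = c := by
    rcases lc with _ | ⟨z, lc'⟩
    · simp at hlcne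
    · simp only [hloopdef, List.getElem_cons_succ, List.getElem_cons_zero]
      simp at hlchd; exact hlchd
  set L : ℕ := loop.length - 1 with hL
  have hL1 : 1 ≤ L := by omega
  set base : ℕ → S := extPath hsucc hwd with hbase
  set σ : ℕ → ℕ → S := iterGlue loop base with hσdef
  have hσ : ∀ i, σ i 0 = w ∧ ∀ n, G (σ i n) (σ i (n + 1)) := by
    intro i
    induction i with
    | zero => exact ⟨extPath_zero hsucc hwd, extPath_path hsucc hwd⟩
    | succ i ih =>
      have hlast' : loop.getLast? = some (σ i 0) := by rw [ih.1]; exact hlooplast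
      constructor
      · show glue loop (σ i) 0 = w
        rw [glue_get hlast' (by omega : 0 < loop.length)]
        simp only [hloopdef, List.getElem_cons_zero]
      · show ∀ n, G (glue loop (σ i) n) (glue loop (σ i) (n + 1))
        exact glue_path hloopch ih.2 hlast'
  have hσd : ∀ i, σ i (i * L + 1) = d := by
    intro i
    induction i with
    | zero =>
      rw [show 0 * L + 1 = 1 by omega]
      exact extPath_one hsucc hwd
    | succ i ih =>
      show glue loop (σ i) ((i + 1) * L + 1) = d
      rw [show (i + 1) * L + 1 = (i * L + 1) + L by rw [Nat.succ_mul]; omega,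
        glue_ge (by omega : loop.length - 1 ≤ i * L + 1 + L),
        show i * L + 1 + L - (loop.length - 1) = i * L + 1 by omega]
      exact ih
  have hσc : ∀ i j, i < j → σ j (i * L + 1) = c := by
    intro i
    induction i with
    | zero =>
      intro j hj
      obtain ⟨j', rfl⟩ : ∃ j', j = j' + 1 := ⟨j - 1, by omega⟩
      show glue loop (σ j') (0 * L + 1) = c
      have hlast' : loop.getLast? = some (σ j' 0) := by rw [(hσ j').1]; exact hlooplast
      rw [show 0 * L + 1 = 1 by omega, glue_get hlast' (by omega : 1 < loop.length)]
      exact hloop1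
    | succ i ih =>
      intro j hj
      obtain ⟨j', rfl⟩ : ∃ j', j = j' + 1 := ⟨j - 1, by omega⟩
      show glue loop (σ j') ((i + 1) * L + 1) = c
      rw [show (i + 1) * L + 1 = (i * L + 1) + L by rw [Nat.succ_mul]; omega,
        glue_ge (by omega : loop.length - 1 ≤ i * L + 1 + L),
        show i * L + 1 + L - (loop.length - 1) = i * L + 1 by omega]
      exact ih j' (by omega)
  -- prefix from s to w
  have hreach' : Relation.ReflTransGen G s w := hreach.trans (cycle_reach hcyc hvl hwl)
  obtain ⟨P, hPne, hPch, hPhd, hPlast⟩ := reach_list hreach'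
  set p : ℕ := P.length - 1 with hp
  have hPlast' : ∀ i, P.getLast? = some (σ i 0) := fun i => by rw [(hσ i).1]; exact hPlast
  set E : ℕ → ℕ → S := fun i => glue P (σ i) with hE
  have hE0 : ∀ i, E i 0 = s := by
    intro i
    show glue P (σ i) 0 = s
    rw [glue_get (hPlast' i) (by have := List.length_pos_iff.mpr hPne; omega : 0 < P.length)]
    rw [List.head?_eq_head hPne] at hPhd
    rw [← Option.some_inj.mp hPhd, List.getElem_zero]
  have hEpath : ∀ i n, G (E i n) (E i (n + 1)) := fun i =>
    glue_path hPch (hσ i).2 (hPlast' i)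
  have hEshift : ∀ i n, E i (p + n) = σ i n := by
    intro i n
    show glue P (σ i) (p + n) = σ i n
    rw [glue_ge (by omega : P.length - 1 ≤ p + n), show p + n - (P.length - 1) = n by omega]
  have hdist : ∀ i j : ℕ, i < j → Kripke.InfDistinct (E i) (E j) := by
    intro i j hij
    exact ⟨p + (i * L + 1), by rw [hEshift, hEshift, hσd i, hσc i j hij]; exact hdc⟩
  refine ⟨fun i => E i.val, fun i => ⟨hE0 i.val, hEpath i.val⟩, fun i j hij => ?_⟩
  have hij' : i.val ≠ j.val := fun h => hij (Fin.ext h)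
  rcases Nat.lt_or_ge i.val j.val with h | h
  · exact hdist _ _ h
  · obtain ⟨m, hm⟩ := hdist j.val i.val (by omega)
    exact ⟨m, hm.symm⟩

theorem core [Fintype S] (hsucc : ∀ a b : S, G a b → ∃ c, G b c) (k : ℕ) (s : S) :
    (∃ e : Fin (k + 1) → (ℕ → S),
       (∀ i, e i 0 = s ∧ ∀ n, G (e i n) (e i (n + 1))) ∧
       (∀ i j, i ≠ j → Kripke.InfDistinct (e i) (e j))) ↔
    ((∃ (l : List S) (v : S), IsNonSinkCycle G l ∧ v ∈ l ∧
        Relation.ReflTransGen G s v) ∨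
     (∃ e : Fin (k + 1) → List S,
        (∀ i, (e i).head? = some s ∧ (e i).Chain' G ∧
          ∃ (t : S) (C : List S), (e i).getLast? = some t ∧
            IsSinkCycle G C ∧ t ∈ C) ∧
        (∀ i j, i ≠ j → Kripke.FinDistinct (e i) (e j)))) := by
  classical
  constructor
  · rintro ⟨e, he, hd⟩
    by_cases hleft : ∃ (l : List S) (v : S), IsNonSinkCycle G l ∧ v ∈ l ∧
        Relation.ReflTransGen G s v
    · exact Or.inl hleft
    · right
      have hOn : ∀ i : Fin (k + 1), ∃ n, ∃ C, IsSinkCycle G C ∧ e i n ∈ C := by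
        intro i
        rcases exists_sink_or_nonsink (he i).2 with h | h
        · rw [(he i).1] at h; exact absurd h hleft
        · exact h
      set A : Fin (k + 1) → ℕ := fun i => Nat.find (hOn i) with hA
      have hAspec : ∀ i, ∃ C, IsSinkCycle G C ∧ e i (A i) ∈ C := fun i => Nat.find_spec (hOn i)
      have key : ∀ i j : Fin (k + 1), A i ≤ A j →
          (∀ m, m ≤ A i → m ≤ A j → e i m = e j m) → ∀ n, e i n = e j n := by
        intro i j hle hag n
        obtain ⟨C, hC, hmem⟩ := hAspec i
        have hdet := sink_det hC (π₁ := fun m => e i (A i + m)) (π₂ := fun m => e j (A i + m))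
          (fun m => (he i).2 (A i + m)) (fun m => (he j).2 (A i + m))
          (hag _ le_rfl hle) hmem
        rcases le_or_gt n (A i) with h | h
        · exact hag n h (le_trans h hle)
        · have := hdet (n - A i)
          simpa [show A i + (n - A i) = n by omega] using this
      refine ⟨fun i => (List.range (A i + 1)).map (e i), fun i => ⟨?_, ?_, ?_⟩, ?_⟩
      · rw [range_map_head?, (he i).1]
      · exact range_map_chain' (e i) (he i).2 _
      · obtain ⟨C, hC, hmem⟩ := hAspec i
        exact ⟨e i (A i), C, range_map_getLast? _ _, hC, hmem⟩
      · intro i j hij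
        by_contra hnd
        unfold Kripke.FinDistinct at hnd
        push_neg at hnd
        have hag : ∀ m, m ≤ A i → m ≤ A j → e i m = e j m := by
          intro m h1 h2
          have := hnd m (by simp; omega) (by simp; omega)
          simpa using this
        obtain ⟨m, hm⟩ := hd i j hij
        rcases le_or_gt (A i) (A j) with h | h
        · exact hm (key i j h hag m)
        · exact hm ((key j i (by omega) (fun m h1 h2 => (hag m h2 h1).symm) m).symm)
  · rintro (⟨l, v, hns, hvl, hreach⟩ | ⟨f, hf, hfd⟩)
    · exact nonsink_paths hsucc hns hvl hreach k
    · have hext : ∀ i : Fin (k + 1), ∃ Ei : ℕ → S,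
          Ei 0 = s ∧ (∀ n, G (Ei n) (Ei (n + 1))) ∧
          ∀ m (h : m < (f i).length), Ei m = (f i)[m] := by
        intro i
        obtain ⟨hhd, hch, t, C, hlast, hC, htC⟩ := hf i
        have hne : f i ≠ [] := by rintro h; rw [h] at hhd; simp at hhd
        obtain ⟨w, hwC, htw⟩ := cycle_out_edge hC.1 htC
        have hρ0 : (f i).getLast? = some (extPath hsucc htw 0) := by
          rw [extPath_zero]; exact hlast
        refine ⟨glue (f i) (extPath hsucc htw), ?_, glue_path hch (extPath_path hsucc htw) hρ0,
          fun m h => glue_get hρ0 h⟩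
        rw [glue_get hρ0 (by have := List.length_pos_iff.mpr hne; omega : 0 < (f i).length)]
        rw [List.head?_eq_head hne] at hhd
        rw [← Option.some_inj.mp hhd, List.getElem_zero]
      choose E hE0 hEpath hEget using hext
      refine ⟨E, fun i => ⟨hE0 i, hEpath i⟩, fun i j hij => ?_⟩
      obtain ⟨m, h₁, h₂, hne⟩ := hfd i j hij
      exact ⟨m, by rw [hEget i m h₁, hEget j m h₂]; exact hne⟩


end Claim1

section Bridge

open Claim1

variable {S AP : Type} (K : Kripke S AP) (θ : GCTL AP)

lemma sat_EG0_elim {v : S} (h : K.sat (.EG 0 θ) v) :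
    ∃ π : ℕ → S, π 0 = v ∧ K.IsInfPath π ∧ ∀ n, K.sat θ (π n) := by
  simp only [Kripke.sat] at h
  obtain ⟨e, he, -⟩ := h
  exact ⟨e 0, he 0⟩

lemma sat_EG0_intro {v : S} {π : ℕ → S} (h0 : π 0 = v) (hp : K.IsInfPath π)
    (hθ : ∀ n, K.sat θ (π n)) : K.sat (.EG 0 θ) v := by
  simp only [Kripke.sat]
  exact ⟨fun _ => π, fun _ => ⟨h0, hp, hθ⟩, fun i j hij => absurd (Fin.ext (show i.val = j.val by have h1 := i.isLt; have h2 := j.isLt; omega)) hij⟩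

lemma sat_EG0_shift {π : ℕ → S} (hp : K.IsInfPath π) (hθ : ∀ n, K.sat θ (π n)) (n : ℕ) :
    K.sat (.EG 0 θ) (π n) :=
  sat_EG0_intro K θ rfl (fun m => hp (n + m)) (fun m => hθ (n + m))

lemma sat_theta_of_EG0 {v : S} (h : K.sat (.EG 0 θ) v) : K.sat θ v := by
  obtain ⟨π, h0, -, hθ⟩ := sat_EG0_elim K θ h
  rw [← h0]; exact hθ 0

lemma inducedG_succ : ∀ a b : S, inducedG K θ a b → ∃ c, inducedG K θ b c := by
  rintro a b ⟨hR, ha, hb⟩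
  obtain ⟨π, h0, hp, hθ⟩ := sat_EG0_elim K θ hb
  refine ⟨π 1, ?_, hb, sat_EG0_shift K θ hp hθ 1⟩
  rw [← h0]; exact hp 0

lemma sat_EG_iff_inducedG_paths (k : ℕ) (s : S) (hs : K.sat (.EG 0 θ) s) :
    K.sat (.EG k θ) s ↔
      ∃ e : Fin (k + 1) → (ℕ → S),
        (∀ i, e i 0 = s ∧ ∀ n, inducedG K θ (e i n) (e i (n + 1))) ∧
        (∀ i j, i ≠ j → Kripke.InfDistinct (e i) (e j)) := by
  simp only [Kripke.sat]
  constructor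
  · rintro ⟨e, he, hd⟩
    refine ⟨e, fun i => ⟨(he i).1, fun n => ?_⟩, hd⟩
    obtain ⟨h0, hp, hθ⟩ := he i
    exact ⟨hp n, sat_EG0_shift K θ hp hθ n, sat_EG0_shift K θ hp hθ (n + 1)⟩
  · rintro ⟨e, he, hd⟩
    have good : ∀ (i : Fin (k + 1)) (n : ℕ), K.sat (.EG 0 θ) (e i n) := by
      intro i n
      cases n with
      | zero => rw [(he i).1]; exact hs
      | succ n => exact ((he i).2 n).2.2
    exact ⟨e, fun i => ⟨(he i).1, fun n => ((he i).2 n).1,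
      fun n => sat_theta_of_EG0 K θ (good i n)⟩, hd⟩

theorem final_claim [Fintype S] (K : Kripke S AP) (θ₁ : GCTL AP) (k : ℕ) (s : S)
    (hs : K.sat (.EG 0 θ₁) s) :
    K.sat (.EG k θ₁) s ↔
      ((∃ (l : List S) (v : S), IsNonSinkCycle (inducedG K θ₁) l ∧ v ∈ l ∧
          Relation.ReflTransGen (inducedG K θ₁) s v) ∨
       (∃ e : Fin (k + 1) → List S,
          (∀ i, (e i).head? = some s ∧ (e i).Chain' (inducedG K θ₁) ∧
            ∃ (t : S) (C : List S), (e i).getLast? = some t ∧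
              IsSinkCycle (inducedG K θ₁) C ∧ t ∈ C) ∧
          (∀ i j, i ≠ j → Kripke.FinDistinct (e i) (e j)))) := by
  rw [sat_EG_iff_inducedG_paths K θ₁ k s hs]
  exact Claim1.core (inducedG_succ K θ₁) k s

end Bridge

/-- Claim 1: for a state `s` satisfying `E^{>0}Gθ₁`, `(K,s) ⊨ E^{>k}Gθ₁` iff, in the
graph induced by the states satisfying `E^{>0}Gθ₁`, either a non-sink-cycle is reachable
from `s`, or there are `k+1` pairwise distinct finite paths connecting `s` to
sink-cycles. -/
theorem gradedEG_iff_nonSinkCycle_or_paths {S AP : Type} [Fintype S]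
    (K : Kripke S AP) (θ₁ : GCTL AP) (k : ℕ) (s : S)
    (hs : K.sat (.EG 0 θ₁) s) :
    K.sat (.EG k θ₁) s ↔
      ((∃ (l : List S) (v : S), IsNonSinkCycle (inducedG K θ₁) l ∧ v ∈ l ∧
          Relation.ReflTransGen (inducedG K θ₁) s v) ∨
       (∃ e : Fin (k + 1) → List S,
          (∀ i, (e i).head? = some s ∧ (e i).Chain' (inducedG K θ₁) ∧
            ∃ (t : S) (C : List S), (e i).getLast? = some t ∧
              IsSinkCycle (inducedG K θ₁) C ∧ t ∈ C) ∧
          (∀ i j, i ≠ j → Kripke.FinDistinct (e i) (e j)))) := by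
  exact final_claim K θ₁ k s hs
end

section
/- Let K = ⟨S, s_in, R, L⟩ be a finite Kripke structure, θ₁, θ₂ graded-CTL formulas, and k ≥ 0. Let G be the directed graph whose vertices are the states of K satisfying E^{>0}(θ₁Uθ₂) and whose edges are the transitions of R between such states, except that all edges outgoing from states where θ₁ does not hold are deleted. Then for every state s satisfying E^{>0}(θ₁Uθ₂): (K,s) ⊨ E^{>k}(θ₁Uθ₂) if and only if in G either a non-sink-cycle is reachable from s, or there exist k+1 pairwise distinct finite paths connecting s to states where θ₂ holds. -/
/-- The edge relation of the directed graph `G` induced by the states of `K`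
satisfying `E^{>0}(θ₁Uθ₂)`, with the transitions of `R` between such states, where
all edges outgoing from states not satisfying `θ₁` are deleted. -/
def inducedU {S AP : Type} (K : Kripke S AP) (θ₁ θ₂ : GCTL AP) : S → S → Prop :=
  fun a b => K.R a b ∧ K.sat (.EU 0 θ₁ θ₂) a ∧ K.sat (.EU 0 θ₁ θ₂) b ∧ K.sat θ₁ a


lemma getElem_of_chain' {α} {r : α → α → Prop} {l : List α} (h : l.Chain' r) {i : ℕ}
    (hi : i + 1 < l.length) : r l[i] l[i+1] := by
  have := List.isChain_iff_getElem.1 h i (by omega)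
  simpa using this

lemma chain'_of_getElem {α} {r : α → α → Prop} {l : List α}
    (h : ∀ i : ℕ, (hi : i + 1 < l.length) → r l[i] l[i+1]) : l.Chain' r := by
  apply List.isChain_iff_getElem.2
  intro i hi
  simpa using h i (by omega)

lemma head?_getElem {α} {l : List α} {a : α} (h : l.head? = some a) (h0 : 0 < l.length) :
    l[0] = a := by
  rw [List.head?_eq_getElem?, List.getElem?_eq_getElem h0] at h
  exact Option.some_injective _ h

lemma getLast?_getElem {α} {l : List α} {a : α} (h : l.getLast? = some a)
    (h0 : 0 < l.length) : l[l.length - 1] = a := by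
  rw [List.getLast?_eq_getElem?, List.getElem?_eq_getElem (by omega)] at h
  exact Option.some_injective _ h

lemma rtg_to_list {α} {r : α → α → Prop} {a b : α} (h : Relation.ReflTransGen r a b) :
    ∃ l : List α, l.Chain' r ∧ l.head? = some a ∧ l.getLast? = some b := by
  induction h with
  | refl => exact ⟨[a], List.isChain_singleton a, rfl, rfl⟩
  | @tail b c h₁ h₂ ih =>
    obtain ⟨l, hc, hh, hl⟩ := ih
    refine ⟨l ++ [c], List.isChain_append.2 ⟨hc, List.isChain_singleton c, ?_⟩, ?_, by simp⟩
    · intro x hx y hy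
      simp at hy
      rw [hl] at hx; simp at hx; subst hx; subst hy; exact h₂
    · have hne : l ≠ [] := by intro h; rw [h] at hh; simp at hh
      cases l with
      | nil => simp at hne
      | cons z zs => simpa using hh

lemma chain_rtg {α} {r : α → α → Prop} {l : List α} (h : l.Chain' r) {i : ℕ}
    (hi : i < l.length) :
    ∀ j : ℕ, i ≤ j → (hj : j < l.length) → Relation.ReflTransGen r l[i] l[j] := by
  intro j hij
  induction j, hij using Nat.le_induction with
  | base => intro hj; exact .refl
  | succ n hn ih =>
    intro hj
    exact .tail (ih (by omega)) (getElem_of_chain' h hj)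

section RepL
variable {α : Type}

def repL (D : List α) : ℕ → List α
  | 0 => []
  | n+1 => D ++ repL D n

lemma repL_add (D : List α) (m n : ℕ) : repL D (m + n) = repL D m ++ repL D n := by
  induction m with
  | zero => simp [repL]
  | succ m ih =>
    have : m + 1 + n = (m + n) + 1 := by omega
    rw [this]
    simp only [repL, ih, List.append_assoc]

lemma repL_length (D : List α) (n : ℕ) : (repL D n).length = n * D.length := by
  induction n with
  | zero => simp [repL]
  | succ n ih => simp [repL, ih]; ring

lemma head?_repL {D : List α} (hD : D ≠ []) {n : ℕ} (hn : 0 < n) :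
    (repL D n).head? = D.head? := by
  cases n with
  | zero => omega
  | succ n =>
    show (D ++ repL D n).head? = D.head?
    cases D with
    | nil => simp at hD
    | cons a l => simp

lemma getLast?_repL (D : List α) {n : ℕ} (hn : 0 < n) :
    (repL D n).getLast? = D.getLast? := by
  induction n with
  | zero => omega
  | succ n ih =>
    show (D ++ repL D n).getLast? = D.getLast?
    cases n with
    | zero => simp [repL]
    | succ m =>
      rw [List.getLast?_append, ih (by omega)]
      cases hD : D.getLast? <;> simp [hD, Option.or]

lemma chain'_repL {r : α → α → Prop} {D : List α} (hD : D ≠ []) (hch : D.Chain' r)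
    (hedge : ∀ x ∈ D.getLast?, ∀ y ∈ D.head?, r x y) (n : ℕ) : (repL D n).Chain' r := by
  induction n with
  | zero => simp [repL]; exact List.isChain_nil
  | succ n ih =>
    refine List.isChain_append.2 ⟨hch, ih, ?_⟩
    intro x hx y hy
    cases n with
    | zero => simp [repL] at hy
    | succ m =>
      rw [head?_repL hD (by omega)] at hy
      exact hedge x hx y hy

end RepL

section CycleLemmas
variable {V : Type} {r : V → V → Prop}

lemma cycle_mem_rtg {l : List V} (hc : IsCycle r l) {a b : V} (ha : a ∈ l) (hb : b ∈ l) :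
    Relation.ReflTransGen r a b := by
  obtain ⟨hne, _, hch, x, y, hhd, hlast, hedge⟩ := hc
  have hlen : 0 < l.length := List.length_pos_iff.2 hne
  obtain ⟨ia, hia, rfl⟩ := List.mem_iff_getElem.1 ha
  obtain ⟨ib, hib, rfl⟩ := List.mem_iff_getElem.1 hb
  have hx : l[0] = x := head?_getElem hhd hlen
  have hy : l[l.length - 1] = y := getLast?_getElem hlast hlen
  have h1 : Relation.ReflTransGen r l[ia] l[l.length - 1] :=
    chain_rtg hch hia _ (by omega) (by omega)
  have h2 : Relation.ReflTransGen r l[0] l[ib] :=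
    chain_rtg hch hlen _ (by omega) hib
  refine (h1.tail ?_).trans h2
  rw [hx, hy]; exact hedge

lemma cycle_exit {l : List V} (hc : IsCycle r l) {w : V} (hw : w ∈ l) :
    ∃ u, r w u ∧ Relation.ReflTransGen r u w := by
  obtain ⟨iw, hiw, rfl⟩ := List.mem_iff_getElem.1 hw
  obtain ⟨hne, hnd, hch, x, y, hhd, hlast, hedge⟩ := id hc
  have hlen : 0 < l.length := List.length_pos_iff.2 hne
  by_cases h : iw + 1 < l.length
  · refine ⟨l[iw+1], getElem_of_chain' hch h, cycle_mem_rtg hc (List.getElem_mem _) hw⟩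
  · have hiw' : iw = l.length - 1 := by omega
    refine ⟨l[0], ?_, cycle_mem_rtg hc (List.getElem_mem hlen) hw⟩
    have hx : l[0] = x := head?_getElem hhd hlen
    have hy : l[l.length - 1] = y := getLast?_getElem hlast hlen
    rw [hx]
    have : l[iw] = y := by rw [← hy]; congr 1
    rw [this]; exact hedge

end CycleLemmas

namespace Kripke
variable {S AP : Type} (K : Kripke S AP) (θ₁ θ₂ : GCTL AP)

/-- The conditions for a list to be an evidence of `θ₁ U θ₂` from `s`. -/
def EUEv (s : S) (l : List S) : Prop :=
  l ≠ [] ∧ l.Chain' K.R ∧ l.head? = some s ∧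
    (∃ t, l.getLast? = some t ∧ K.sat θ₂ t) ∧
    (∀ (m : ℕ) (h : m + 1 < l.length), K.sat θ₁ l[m])

lemma sat_EU_iff (k : ℕ) (s : S) :
    K.sat (.EU k θ₁ θ₂) s ↔
      ∃ e : Fin (k + 1) → List S,
        (∀ i, K.EUEv θ₁ θ₂ s (e i)) ∧ (∀ i j, i ≠ j → FinDistinct (e i) (e j)) :=
  Iff.rfl

variable {K θ₁ θ₂}

lemma EUEv.suffix {s : S} {l : List S} (h : K.EUEv θ₁ θ₂ s l) {i : ℕ} (hi : i < l.length) :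
    K.EUEv θ₁ θ₂ l[i] (l.drop i) := by
  obtain ⟨hne, hch, hhd, ⟨t, hlast, ht⟩, hmid⟩ := h
  refine ⟨?_, ?_, ?_, ⟨t, ?_, ht⟩, ?_⟩
  · intro h
    have := congrArg List.length h
    simp at this; omega
  · apply chain'_of_getElem
    intro m hm
    rw [List.length_drop] at hm
    rw [List.getElem_drop, List.getElem_drop]
    exact getElem_of_chain' hch (by omega)
  · rw [List.drop_eq_getElem_cons hi]; rfl
  · have h1 : (l.drop i).getLast? = l[i + ((l.drop i).length - 1)]? := by
      rw [List.getLast?_eq_getElem?, List.getElem?_drop]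
    rw [h1, List.length_drop]
    have he : i + (l.length - i - 1) = l.length - 1 := by omega
    rw [he, ← List.getLast?_eq_getElem?]
    exact hlast
  · intro m hm
    rw [List.length_drop] at hm
    rw [List.getElem_drop]
    exact hmid (i + m) (by omega)

lemma EUEv.sat_EU0 {s : S} {l : List S} (h : K.EUEv θ₁ θ₂ s l) :
    K.sat (.EU 0 θ₁ θ₂) s :=
  ⟨fun _ => l, fun _ => h, fun i j hij => absurd (Fin.ext (by omega)) hij⟩

lemma EUEv.chain_induced {s : S} {l : List S} (h : K.EUEv θ₁ θ₂ s l) :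
    l.Chain' (inducedU K θ₁ θ₂) := by
  apply chain'_of_getElem
  intro i hi
  refine ⟨getElem_of_chain' h.2.1 hi, (h.suffix (by omega)).sat_EU0,
    (h.suffix hi).sat_EU0, h.2.2.2.2 i hi⟩

end Kripke

namespace Kripke
variable {S AP : Type} {K : Kripke S AP} {θ₁ θ₂ : GCTL AP}

lemma head?_append_left {α} {l l' : List α} {a : α} (h : l.head? = some a) :
    (l ++ l').head? = some a := by
  rw [List.head?_append, h]; rfl

lemma getLast?_append_right {α} {l l' : List α} {a : α} (h : l'.getLast? = some a) :
    (l ++ l').getLast? = some a := by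
  rw [List.getLast?_append, h]; rfl

lemma build_paths {s w u t : S} {q D E : List S}
    (hqch : q.Chain' (inducedU K θ₁ θ₂)) (hqhd : q.head? = some s)
    (hqlast : q.getLast? = some w)
    (hDch : D.Chain' (inducedU K θ₁ θ₂)) (hDhd : D.head? = some u)
    (hDlast : D.getLast? = some w)
    (hwu : inducedU K θ₁ θ₂ w u) (hwt : inducedU K θ₁ θ₂ w t) (htu : t ≠ u)
    (hE : K.EUEv θ₁ θ₂ t E) (k : ℕ) : K.sat (.EU k θ₁ θ₂) s := by
  have hqne : q ≠ [] := by intro h; rw [h] at hqhd; simp at hqhd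
  have hDne : D ≠ [] := by intro h; rw [h] at hDhd; simp at hDhd
  have hqpos : 0 < q.length := List.length_pos_iff.2 hqne
  have hDpos : 0 < D.length := List.length_pos_iff.2 hDne
  have hEpos : 0 < E.length := List.length_pos_iff.2 hE.1
  -- The n-th pumped path
  let Q : ℕ → List S := fun n => q ++ repL D n
  let P : ℕ → List S := fun n => Q n ++ E
  have hQlen : ∀ n, (Q n).length = q.length + n * D.length := by
    intro n; simp [Q, repL_length]
  have hQhd : ∀ n, (Q n).head? = some s := fun n => head?_append_left hqhd
  have hQlast : ∀ n, (Q n).getLast? = some w := by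
    intro n
    cases n with
    | zero => simpa [Q, repL] using hqlast
    | succ n =>
      exact getLast?_append_right (by rw [getLast?_repL D (by omega)]; exact hDlast)
  have hrepch : ∀ n, (repL D n).Chain' (inducedU K θ₁ θ₂) := by
    intro n
    refine chain'_repL hDne hDch ?_ n
    intro x hx y hy
    rw [hDlast] at hx; rw [hDhd] at hy
    simp at hx hy; subst hx; subst hy; exact hwu
  have hrephd : ∀ n, 0 < n → (repL D n).head? = some u := by
    intro n hn; rw [head?_repL hDne hn]; exact hDhd
  have hQch : ∀ n, (Q n).Chain' (inducedU K θ₁ θ₂) := by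
    intro n
    refine List.isChain_append.2 ⟨hqch, hrepch n, ?_⟩
    intro x hx y hy
    rw [hqlast] at hx; simp at hx; subst hx
    cases n with
    | zero => simp [repL] at hy
    | succ n => rw [hrephd (n+1) (by omega)] at hy; simp at hy; subst hy; exact hwu
  have hθ₁w : K.sat θ₁ w := hwt.2.2.2
  have hQθ₁ : ∀ n m, (hm : m < (Q n).length) → K.sat θ₁ ((Q n)[m]'hm) := by
    intro n m hm
    by_cases h : m + 1 < (Q n).length
    · exact (getElem_of_chain' (hQch n) h).2.2.2
    · have hm1 : m = (Q n).length - 1 := by omega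
      subst hm1
      rw [getLast?_getElem (hQlast n) (by omega)]
      exact hθ₁w
  have hPlen : ∀ n, (P n).length = (Q n).length + E.length := by
    intro n; simp [P]
  have hPev : ∀ n, K.EUEv θ₁ θ₂ s (P n) := by
    intro n
    refine ⟨List.ne_nil_of_length_pos (by rw [hPlen n]; omega), ?_, ?_, ?_, ?_⟩
    · refine List.isChain_append.2 ⟨(hQch n).imp (fun a b h => h.1), hE.2.1, ?_⟩
      intro x hx y hy
      rw [hQlast n] at hx; rw [hE.2.2.1] at hy
      simp at hx hy; subst hx; subst hy; exact hwt.1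
    · exact head?_append_left (hQhd n)
    · obtain ⟨z, hz, hθz⟩ := hE.2.2.2.1
      exact ⟨z, getLast?_append_right hz, hθz⟩
    · intro m hm
      rw [hPlen n] at hm
      by_cases h : m < (Q n).length
      · have := List.getElem_append_left h (h' := by show m < (P n).length; rw [hPlen n]; omega)
        rw [this]
        exact hQθ₁ n m h
      · have hle : (Q n).length ≤ m := by omega
        have := List.getElem_append_right hle (h₂ := by show m < (P n).length; rw [hPlen n]; omega)
        rw [this]
        exact hE.2.2.2.2 (m - (Q n).length) (by omega)
  -- distinctness
  have hkey : ∀ n m : ℕ, n < m → FinDistinct (P n) (P m) := by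
    intro n m hnm
    have h₁ : (Q n).length < (P n).length := by rw [hPlen n]; omega
    have h₂ : (Q n).length < (P m).length := by
      rw [hPlen m, hQlen m, hQlen n]
      have h' : n * D.length + D.length ≤ m * D.length := by
        have h'' : (n + 1) * D.length ≤ m * D.length :=
          Nat.mul_le_mul_right _ (by omega)
        rwa [Nat.succ_mul] at h''
      omega
    refine ⟨(Q n).length, h₁, h₂, ?_⟩
    have hv1 : (P n)[(Q n).length]? = some t := by
      rw [List.getElem?_append_right (le_refl _), Nat.sub_self,
        ← List.head?_eq_getElem?, hE.2.2.1]
    have hsplit : Q m = Q n ++ repL D (m - n) := by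
      show q ++ repL D m = (q ++ repL D n) ++ repL D (m - n)
      rw [List.append_assoc, ← repL_add]
      congr 2
      omega
    have hv2 : (P m)[(Q n).length]? = some u := by
      have hlt : (Q n).length < (Q m).length := by
        rw [hQlen m, hQlen n]
        have h'' : (n + 1) * D.length ≤ m * D.length :=
          Nat.mul_le_mul_right _ (by omega)
        rw [Nat.succ_mul] at h''
        omega
      rw [show P m = Q m ++ E from rfl, List.getElem?_append, if_pos hlt, hsplit,
        List.getElem?_append_right (le_refl _), Nat.sub_self,
        ← List.head?_eq_getElem?, hrephd (m - n) (by omega)]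
    rw [List.getElem?_eq_getElem h₁] at hv1
    rw [List.getElem?_eq_getElem h₂] at hv2
    simp only [Option.some_inj] at hv1 hv2
    rw [hv1, hv2]
    exact htu
  refine ⟨fun i => P i.val, fun i => hPev i.val, ?_⟩
  intro i j hij
  rcases lt_trichotomy i.val j.val with h | h | h
  · exact hkey _ _ h
  · exact absurd (Fin.ext h) hij
  · obtain ⟨a, ha₁, ha₂, hne⟩ := hkey _ _ h
    exact ⟨a, ha₂, ha₁, fun hh => hne hh.symm⟩

end Kripke

/-- Claim 2: for a state `s` satisfying `E^{>0}(θ₁Uθ₂)`, `(K,s) ⊨ E^{>k}(θ₁Uθ₂)` iff, in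
the graph induced by the states satisfying `E^{>0}(θ₁Uθ₂)` (with edges from states not
satisfying `θ₁` deleted), either a non-sink-cycle is reachable from `s`, or there are
`k+1` pairwise distinct finite paths connecting `s` to states where `θ₂` holds. -/
theorem gradedEU_iff_nonSinkCycle_or_paths {S AP : Type} [Fintype S]
    (K : Kripke S AP) (θ₁ θ₂ : GCTL AP) (k : ℕ) (s : S)
    (hs : K.sat (.EU 0 θ₁ θ₂) s) :
    K.sat (.EU k θ₁ θ₂) s ↔
      ((∃ (l : List S) (v : S), IsNonSinkCycle (inducedU K θ₁ θ₂) l ∧ v ∈ l ∧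
          Relation.ReflTransGen (inducedU K θ₁ θ₂) s v) ∨
       (∃ e : Fin (k + 1) → List S,
          (∀ i, (e i).head? = some s ∧ (e i).Chain' (inducedU K θ₁ θ₂) ∧
            ∃ t : S, (e i).getLast? = some t ∧ K.sat θ₂ t) ∧
          (∀ i j, i ≠ j → Kripke.FinDistinct (e i) (e j)))) := by
  rw [Kripke.sat_EU_iff]
  constructor
  · rintro ⟨e, he, hd⟩
    exact Or.inr ⟨e, fun i => ⟨(he i).2.2.1, (he i).chain_induced, (he i).2.2.2.1⟩, hd⟩
  · rintro (⟨l, v, ⟨hcyc, w, hwl, t₁, t₂, hne12, ht1, ht2⟩, hvl, hsv⟩ | ⟨e, he, hd⟩)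
    · -- a non-sink-cycle is reachable: pump it
      have hsw : Relation.ReflTransGen (inducedU K θ₁ θ₂) s w :=
        hsv.trans (cycle_mem_rtg hcyc hvl hwl)
      obtain ⟨q, hqch, hqhd, hqlast⟩ := rtg_to_list hsw
      obtain ⟨u, hwu, huw⟩ := cycle_exit hcyc hwl
      obtain ⟨D, hDch, hDhd, hDlast⟩ := rtg_to_list huw
      by_cases h : t₁ = u
      · have htu : t₂ ≠ u := fun hh => hne12 (h.trans hh.symm)
        obtain ⟨e0, he0, -⟩ := (ht2.2.2.1 : K.sat (.EU 0 θ₁ θ₂) t₂)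
        exact Kripke.build_paths hqch hqhd hqlast hDch hDhd hDlast hwu ht2 htu (he0 0) k
      · obtain ⟨e0, he0, -⟩ := (ht1.2.2.1 : K.sat (.EU 0 θ₁ θ₂) t₁)
        exact Kripke.build_paths hqch hqhd hqlast hDch hDhd hDlast hwu ht1 h (he0 0) k
    · -- k+1 distinct G-paths to θ₂-states
      refine ⟨e, fun i => ?_, hd⟩
      obtain ⟨hhd, hch, t, hlast, ht⟩ := he i
      refine ⟨by intro hh; rw [hh] at hhd; simp at hhd,
        hch.imp (fun a b hab => hab.1), hhd, ⟨t, hlast, ht⟩, ?_⟩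
      intro m hm
      exact (getElem_of_chain' hch hm).2.2.2
end

section
/- Graded-CTL strictly extends CTL: for any atomic proposition p, there is no CTL formula φ (built from atomic propositions by ¬, ∧, EXψ₁, EGψ₁, E(ψ₁Uψ₂)) such that for every Kripke structure K and every state s of K, (K,s) ⊨ φ if and only if (K,s) ⊨ E^{>1}Xp. -/
/-- A graded-CTL formula is a (classical) CTL formula when every grading constant
is `0`. -/
def GCTL.IsCTL {AP : Type} : GCTL AP → Prop
  | .atom _ => True
  | .not φ => φ.IsCTL
  | .and φ ψ => φ.IsCTL ∧ ψ.IsCTL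
  | .EX k φ => k = 0 ∧ φ.IsCTL
  | .EG k φ => k = 0 ∧ φ.IsCTL
  | .EU k φ ψ => k = 0 ∧ φ.IsCTL ∧ ψ.IsCTL

section Aux

variable {S AP : Type}

lemma sat_EX_zero (K : Kripke S AP) (φ : GCTL AP) (s : S) :
    K.sat (.EX 0 φ) s ↔ ∃ t, K.R s t ∧ K.sat φ t := by
  constructor
  · rintro ⟨e, h1, -⟩
    obtain ⟨t, -, hR, hφ⟩ := h1 0
    exact ⟨t, hR, hφ⟩
  · rintro ⟨t, hR, hφ⟩
    exact ⟨fun _ => [s, t], fun _ => ⟨t, rfl, hR, hφ⟩,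
      fun i j hij => absurd (Fin.ext (by omega)) hij⟩

lemma sat_EG_zero (K : Kripke S AP) (φ : GCTL AP) (s : S) :
    K.sat (.EG 0 φ) s ↔ ∃ π : ℕ → S, π 0 = s ∧ K.IsInfPath π ∧ ∀ n, K.sat φ (π n) := by
  constructor
  · rintro ⟨e, h1, -⟩
    exact ⟨e 0, h1 0⟩
  · rintro ⟨π, hπ⟩
    exact ⟨fun _ => π, fun _ => hπ, fun i j hij => absurd (Fin.ext (by omega)) hij⟩

lemma sat_EU_zero (K : Kripke S AP) (φ ψ : GCTL AP) (s : S) :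
    K.sat (.EU 0 φ ψ) s ↔ ∃ l : List S, l ≠ [] ∧ l.Chain' K.R ∧ l.head? = some s ∧
      (∃ t, l.getLast? = some t ∧ K.sat ψ t) ∧
      (∀ (m : ℕ) (h : m + 1 < l.length), K.sat φ l[m]) := by
  constructor
  · rintro ⟨e, h1, -⟩
    exact ⟨e 0, h1 0⟩
  · rintro ⟨l, hl⟩
    exact ⟨fun _ => l, fun _ => hl, fun i j hij => absurd (Fin.ext (by omega)) hij⟩

/-- Lifting a finite chain backwards along a bounded morphism. -/
lemma lift_chain {S₁ S₂ : Type} (K₁ : Kripke S₁ AP) (K₂ : Kripke S₂ AP) (f : S₂ → S₁)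
    (hback : ∀ s u, K₁.R (f s) u → ∃ t, K₂.R s t ∧ f t = u) :
    ∀ (l : List S₁) (s : S₂), (f s :: l).Chain' K₁.R →
      ∃ l' : List S₂, (s :: l').Chain' K₂.R ∧ l'.map f = l := by
  intro l
  induction l with
  | nil => exact fun s _ => ⟨[], List.isChain_singleton s, rfl⟩
  | cons u rest ih =>
    intro s hch
    rw [List.Chain', List.isChain_cons_cons] at hch
    obtain ⟨hR, hch⟩ := hch
    obtain ⟨t, hRt, hft⟩ := hback s u hR
    rw [← hft] at hch
    obtain ⟨l'', hch'', hmap⟩ := ih t hch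
    exact ⟨t :: l'', List.isChain_cons_cons.2 ⟨hRt, hch''⟩, by simp [hft, hmap]⟩

/-- Lifting an infinite path backwards along a bounded morphism. -/
lemma lift_inf {S₁ S₂ : Type} (K₁ : Kripke S₁ AP) (K₂ : Kripke S₂ AP) (f : S₂ → S₁)
    (hback : ∀ s u, K₁.R (f s) u → ∃ t, K₂.R s t ∧ f t = u)
    (π : ℕ → S₁) (hπ : K₁.IsInfPath π) (s : S₂) (hs : f s = π 0) :
    ∃ σ : ℕ → S₂, σ 0 = s ∧ K₂.IsInfPath σ ∧ ∀ n, f (σ n) = π n := by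
  have step : ∀ n (x : S₂), f x = π n → ∃ t, K₂.R x t ∧ f t = π (n + 1) := by
    intro n x hx
    exact hback x (π (n + 1)) (by rw [hx]; exact hπ n)
  choose g hg1 hg2 using step
  let σ : (n : ℕ) → {x : S₂ // f x = π n} := fun n =>
    Nat.rec ⟨s, hs⟩ (fun n ih => ⟨g n ih.1 ih.2, hg2 n ih.1 ih.2⟩) n
  refine ⟨fun n => (σ n).1, rfl, fun n => ?_, fun n => (σ n).2⟩
  exact hg1 n (σ n).1 (σ n).2

/-- CTL formulas are invariant under bounded morphisms (functional bisimulations). -/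
lemma ctl_transfer {S₁ S₂ : Type} (K₁ : Kripke S₁ AP) (K₂ : Kripke S₂ AP) (f : S₂ → S₁)
    (hL : ∀ s, K₂.L s = K₁.L (f s))
    (hfwd : ∀ s t, K₂.R s t → K₁.R (f s) (f t))
    (hback : ∀ s u, K₁.R (f s) u → ∃ t, K₂.R s t ∧ f t = u) :
    ∀ φ : GCTL AP, φ.IsCTL → ∀ s : S₂, K₂.sat φ s ↔ K₁.sat φ (f s) := by
  intro φ
  induction φ with
  | atom q => intro _ s; simp [Kripke.sat, hL s]
  | not φ ih => intro h s; simp [Kripke.sat, ih h s]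
  | and φ ψ ihφ ihψ => rintro ⟨h1, h2⟩ s; simp [Kripke.sat, ihφ h1 s, ihψ h2 s]
  | EX k φ ih =>
    rintro ⟨rfl, hφ⟩ s
    rw [sat_EX_zero, sat_EX_zero]
    constructor
    · rintro ⟨t, hR, ht⟩
      exact ⟨f t, hfwd s t hR, (ih hφ t).1 ht⟩
    · rintro ⟨u, hR, hu⟩
      obtain ⟨t, hRt, hft⟩ := hback s u hR
      exact ⟨t, hRt, (ih hφ t).2 (by rw [hft]; exact hu)⟩
  | EG k φ ih =>
    rintro ⟨rfl, hφ⟩ s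
    rw [sat_EG_zero, sat_EG_zero]
    constructor
    · rintro ⟨π, h0, hp, hsat⟩
      exact ⟨fun n => f (π n), by simp [h0], fun n => hfwd _ _ (hp n),
        fun n => (ih hφ (π n)).1 (hsat n)⟩
    · rintro ⟨π, h0, hp, hsat⟩
      obtain ⟨σ, hσ0, hσp, hσf⟩ := lift_inf K₁ K₂ f hback π hp s h0.symm
      exact ⟨σ, hσ0, hσp, fun n => (ih hφ (σ n)).2 (by rw [hσf n]; exact hsat n)⟩
  | EU k φ ψ ihφ ihψ =>
    rintro ⟨rfl, hφ, hψ⟩ s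
    rw [sat_EU_zero, sat_EU_zero]
    constructor
    · rintro ⟨l, hne, hch, hhd, ⟨t, hlast, htψ⟩, hmid⟩
      refine ⟨l.map f, by simpa using hne, List.isChain_map_of_isChain f (fun a b => hfwd a b) hch,
        by simp [List.head?_map, hhd], ⟨f t, by simp [List.getLast?_map, hlast], (ihψ hψ t).1 htψ⟩,
        ?_⟩
      intro m hm
      rw [List.length_map] at hm
      rw [List.getElem_map]
      exact (ihφ hφ l[m]).1 (hmid m hm)
    · rintro ⟨l, hne, hch, hhd, ⟨t, hlast, htψ⟩, hmid⟩
      obtain ⟨a, rest, rfl⟩ := List.exists_cons_of_ne_nil hne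
      have ha : a = f s := by simpa using hhd
      subst ha
      obtain ⟨l'', hch'', hmap⟩ := lift_chain K₁ K₂ f hback rest s hch
      have hmapall : (s :: l'').map f = f s :: rest := by simp [hmap]
      refine ⟨s :: l'', by simp, hch'', by simp, ?_, ?_⟩
      · have : ((s :: l'').map f).getLast? = some t := by rw [hmapall]; exact hlast
        rw [List.getLast?_map] at this
        obtain ⟨t', ht', hft'⟩ := Option.map_eq_some_iff.1 this
        exact ⟨t', ht', (ihψ hψ t').2 (by rw [hft']; exact htψ)⟩
      · intro m hm
        have hlen : (f s :: rest).length = (s :: l'').length := by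
          rw [← hmapall, List.length_map]
        have hm' : m + 1 < (f s :: rest).length := by rw [hlen]; exact hm
        have := hmid m hm'
        simp only [← hmapall, List.getElem_map] at this
        exact (ihφ hφ _).2 this

end Aux

/-- Model 1: on `Bool`, everything moves to `true`, which is labeled `{p}`. -/
def Kone (AP : Type) (p : AP) : Kripke Bool AP where
  init := false
  R := fun _ t => t = true
  total := fun _ => ⟨true, rfl⟩
  L := fun b => if b then {p} else ∅

/-- Model 2: on `Fin 3`, everything moves to `1` or `2`, both labeled `{p}`. -/
def Ktwo (AP : Type) (p : AP) : Kripke (Fin 3) AP where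
  init := 0
  R := fun _ t => t ≠ 0
  total := fun _ => ⟨1, by show (1 : Fin 3) ≠ 0; decide⟩
  L := fun x => if x = 0 then ∅ else {p}

/-- The bounded morphism from model 2 to model 1. -/
def fmor : Fin 3 → Bool := fun x => decide (x ≠ 0)

/-- Graded-CTL strictly extends CTL: no CTL formula is equivalent, over all finite
Kripke structures and states, to `E^{>1}Xp`. -/
theorem no_CTL_formula_equiv_gradedEX {AP : Type} (p : AP) :
    ¬ ∃ φ : GCTL AP, φ.IsCTL ∧
      ∀ (S : Type) (_ : Fintype S) (K : Kripke S AP) (s : S),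
        K.sat φ s ↔ K.sat (.EX 1 (.atom p)) s := by
  rintro ⟨φ, hCTL, hequiv⟩
  have htrans := ctl_transfer (Kone AP p) (Ktwo AP p) fmor
    (by intro s; fin_cases s <;> simp [Kone, Ktwo, fmor])
    (by intro s t h; fin_cases t <;> simp_all [Kone, Ktwo, fmor])
    (by
      intro s u h
      have hu : u = true := h
      exact ⟨1, by simp [Ktwo], by simp [fmor, hu]⟩)
    φ hCTL
  -- `Ktwo` satisfies `E^{>1}Xp` at `0`
  have h2 : (Ktwo AP p).sat (.EX 1 (.atom p)) 0 := by
    refine ⟨![[0, 1], [0, 2]], ?_, ?_⟩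
    · intro i
      fin_cases i
      · exact ⟨1, rfl, by simp [Ktwo], by simp [Ktwo, Kripke.sat]⟩
      · exact ⟨2, rfl, by simp [Ktwo], by simp [Ktwo, Kripke.sat]⟩
    · intro i j hij
      fin_cases i <;> fin_cases j <;> first
        | exact absurd rfl hij
        | exact ⟨1, by simp, by simp, by decide⟩
  -- `Kone` does not satisfy `E^{>1}Xp` at `false`
  have h1 : ¬ (Kone AP p).sat (.EX 1 (.atom p)) false := by
    rintro ⟨e, ha, hb⟩
    obtain ⟨t0, he0, hR0, -⟩ := ha 0
    obtain ⟨t1, he1, hR1, -⟩ := ha 1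
    have ht0 : t0 = true := hR0
    have ht1 : t1 = true := hR1
    subst ht0 ht1
    have hd := hb 0 1 (by decide)
    rw [he0, he1] at hd
    obtain ⟨i, hi1, hi2, hne⟩ := hd
    exact hne rfl
  have e2 := hequiv (Fin 3) inferInstance (Ktwo AP p) 0
  have e1 := hequiv Bool inferInstance (Kone AP p) false
  have ht := htrans 0
  have hf0 : fmor 0 = false := by decide
  rw [hf0] at ht
  exact h1 (e1.1 (ht.1 (e2.2 h2)))
end

section
/- Let M = (M₁,…,M_h) be an SHSM over AP and let P ⊆ AP be a finite set of atomic propositions. Then there exists an HSM M' over AP with at most h·2^{|P|} machines and size at most |M|·2^{|P|} such that the flat Kripke structure (M')^F is isomorphic to M^F up to a renaming of the states, with labels agreeing on all atomic propositions in P. -/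
/-- A Scope-dependent Hierarchical State Machine over `AP`.  Machines are indexed by
`Fin h` (index `i` represents the `(i+1)`-st machine `M_{i+1}` of the paper); the
expansion map returns `none` on nodes and `some j` on a box expanding to machine `j`,
with `j < i` (only lower-indexed machines).  Edges are plain edges `(u,v)` (from nodes)
and box edges `((u,z),v)` (from a box `u` through an output vertex `z`). -/
structure SHSM (AP : Type) where
  h : ℕ
  hpos : 0 < h
  V : Fin h → Type
  Vfin : ∀ i, Fintype (V i)
  init : ∀ i, V i
  out : ∀ i, Set (V i)
  label : ∀ i, V i → Set AP
  expand : ∀ i, V i → Option (Fin h)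
  expand_lt : ∀ i u j, expand i u = some j → (j : ℕ) < (i : ℕ)
  init_node : ∀ i, expand i (init i) = none
  out_node : ∀ i, ∀ z ∈ out i, expand i z = none
  Eplain : ∀ i, V i → V i → Prop
  Ebox : ∀ i, V i → ∀ j, V j → V i → Prop
  Eplain_node : ∀ i u v, Eplain i u v → expand i u = none
  Ebox_ok : ∀ i u j z v, Ebox i u j z v → expand i u = some j ∧ z ∈ out j

namespace SHSM

variable {AP : Type}

instance (M : SHSM AP) (i : Fin M.h) : Fintype (M.V i) := M.Vfin i

/-- The disjoint union of all vertex sets of `M`. -/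
abbrev Vt (M : SHSM AP) : Type := Σ i : Fin M.h, M.V i

/-- The index of the top-level machine `M_h`. -/
def top (M : SHSM AP) : Fin M.h := ⟨M.h - 1, Nat.sub_lt M.hpos Nat.one_pos⟩

/-- `x` is a node (it does not expand to any machine). -/
def IsNode (M : SHSM AP) (x : M.Vt) : Prop := M.expand x.1 x.2 = none

/-- The expansion step relation: `u_{ℓ+1} ∈ V_{expand(u_ℓ)}`. -/
def stepRel (M : SHSM AP) : M.Vt → M.Vt → Prop :=
  fun a b => M.expand a.1 a.2 = some b.1

/-- A well-formed sequence of vertices `u₁ … u_m` (`m ≥ 1`) with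
`u_{ℓ+1} ∈ V_{expand(u_ℓ)}`. -/
def WFSeq (M : SHSM AP) (l : List M.Vt) : Prop :=
  l ≠ [] ∧ l.Chain' M.stepRel

/-- A well-formed sequence which starts in machine `j` and ends at a node.
For `j = M.top` these are exactly the complete well-formed sequences, i.e. the
states of the flat Kripke structure `M^F`; for general `j` they are the states of
the flat Kripke structure of the sub-SHSM `(M₁,…,M_j)`. -/
def CompleteAt (M : SHSM AP) (j : Fin M.h) (l : List M.Vt) : Prop :=
  M.WFSeq l ∧ (∃ x, l.head? = some x ∧ x.1 = j) ∧ (∃ x, l.getLast? = some x ∧ M.IsNode x)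

/-- A complete well-formed sequence: a state of the flat Kripke structure `M^F`. -/
def Complete (M : SHSM AP) (l : List M.Vt) : Prop :=
  M.CompleteAt M.top l

/-- The transition relation of the flat Kripke structure `M^F`, given by the four kinds
of moves induced by the edges of `M`: node to node, node to box, box to node (through an
output vertex), and box to box. -/
def FlatTrans (M : SHSM AP) (X Y : List M.Vt) : Prop :=
  (∃ (p : List M.Vt) (i : Fin M.h) (a b : M.V i),
      X = p ++ [⟨i, a⟩] ∧ Y = p ++ [⟨i, b⟩] ∧
      M.Eplain i a b ∧ M.expand i b = none) ∨
  (∃ (p : List M.Vt) (i : Fin M.h) (a b : M.V i) (j : Fin M.h),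
      X = p ++ [⟨i, a⟩] ∧ Y = p ++ [⟨i, b⟩, ⟨j, M.init j⟩] ∧
      M.Eplain i a b ∧ M.expand i b = some j) ∨
  (∃ (p : List M.Vt) (i : Fin M.h) (a : M.V i) (j : Fin M.h) (z : M.V j) (v : M.V i),
      X = p ++ [⟨i, a⟩, ⟨j, z⟩] ∧ Y = p ++ [⟨i, v⟩] ∧
      M.Ebox i a j z v ∧ M.expand i v = none) ∨
  (∃ (p : List M.Vt) (i : Fin M.h) (a : M.V i) (j : Fin M.h) (z : M.V j) (b : M.V i)
      (j' : Fin M.h),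
      X = p ++ [⟨i, a⟩, ⟨j, z⟩] ∧ Y = p ++ [⟨i, b⟩, ⟨j', M.init j'⟩] ∧
      M.Ebox i a j z b ∧ M.expand i b = some j')

/-- The label of a state of `M^F`: the union of the labels of the vertices occurring
in the sequence. -/
def flatLabel (M : SHSM AP) (l : List M.Vt) : Set AP :=
  {p | ∃ x ∈ l, p ∈ M.label x.1 x.2}

/-- The initial state `⟨in_h⟩` of `M^F`. -/
def initSeq (M : SHSM AP) : List M.Vt := [⟨M.top, M.init M.top⟩]

lemma initSeq_complete (M : SHSM AP) : M.Complete M.initSeq :=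
  ⟨⟨by simp [initSeq], by simp only [initSeq]; exact List.isChain_singleton _⟩,
   ⟨⟨M.top, M.init M.top⟩, rfl, rfl⟩,
   ⟨⟨M.top, M.init M.top⟩, by simp [initSeq], M.init_node M.top⟩⟩

/-- The states of the flat Kripke structure `M^F`. -/
def States (M : SHSM AP) : Type := {l : List M.Vt // M.Complete l}

/-- `M` is an HSM: boxes carry no atomic propositions. -/
def IsHSM (M : SHSM AP) : Prop :=
  ∀ i (u : M.V i), M.expand i u ≠ none → M.label i u = ∅

/-- The size of `M`: total number of vertices plus total number of edges. -/
noncomputable def size (M : SHSM AP) : ℕ :=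
  Fintype.card M.Vt
  + {e : Σ i : Fin M.h, M.V i × M.V i | M.Eplain e.1 e.2.1 e.2.2}.ncard
  + {e : Σ (i : Fin M.h) (j : Fin M.h), M.V i × M.V j × M.V i |
       M.Ebox e.1 e.2.2.1 e.2.1 e.2.2.2.1 e.2.2.2.2}.ncard

/-- `expand⁺`: machine `j` belongs to the iterated expansion of vertex `u`. -/
inductive InExpandPlus (M : SHSM AP) : M.Vt → Fin M.h → Prop where
  | base {i : Fin M.h} {u : M.V i} {j : Fin M.h} :
      M.expand i u = some j → InExpandPlus M ⟨i, u⟩ j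
  | step {i : Fin M.h} {u : M.V i} {j : Fin M.h} (u' : M.V j) {j' : Fin M.h} :
      M.expand i u = some j → InExpandPlus M ⟨j, u'⟩ j' → InExpandPlus M ⟨i, u⟩ j'

/-- `u` is an ancestor of `v`: `v` lies in a machine belonging to `expand⁺(u)`. -/
def Ancestor (M : SHSM AP) (u v : M.Vt) : Prop :=
  M.InExpandPlus u v.1

/-- A restricted SHSM: labels of a vertex and of any of its descendants are disjoint. -/
def Restricted (M : SHSM AP) : Prop :=
  ∀ u v : M.Vt, M.Ancestor u v → M.label u.1 u.2 ∩ M.label v.1 v.2 = ∅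

end SHSM

/-- The flat Kripke structures of `M` and `M'` are isomorphic: a bijection of states
mapping the initial state to the initial state and preserving transitions and labels. -/
def FlatIso {AP : Type} (M M' : SHSM AP) : Prop :=
  ∃ f : M.States ≃ M'.States,
    f ⟨M.initSeq, M.initSeq_complete⟩ = ⟨M'.initSeq, M'.initSeq_complete⟩ ∧
    (∀ X Y : M.States, M.FlatTrans X.1 Y.1 ↔ M'.FlatTrans (f X).1 (f Y).1) ∧
    (∀ X : M.States, M.flatLabel X.1 = M'.flatLabel (f X).1)

namespace ShsmToHsm

open scoped Classical

variable {AP : Type} (M : SHSM AP) (P : Set AP) (hP : P.Finite)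

/-- The type of subsets of `P`. -/
def T : Type := ↥(hP.toFinset.powerset)

noncomputable instance : Fintype (T P hP) := by unfold T; infer_instance

lemma card_T : Fintype.card (T P hP) = 2 ^ P.ncard := by
  simp [T, Finset.card_powerset, Set.ncard_eq_toFinset_card P hP]
  exact (Fintype.card_coe _).trans (Finset.card_powerset _)

/-- The empty subset of `P`. -/
def Tempty : T P hP := ⟨∅, Finset.empty_mem_powerset _⟩

lemma Npos : 0 < 2 ^ P.ncard := Nat.pow_pos (by norm_num)

/-- Enumeration of subsets of `P`, sending `∅` to the last index. -/
noncomputable def eS : T P hP ≃ Fin (2 ^ P.ncard) :=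
  (Fintype.equivFinOfCardEq (card_T P hP)).trans
    (Equiv.swap ((Fintype.equivFinOfCardEq (card_T P hP)) (Tempty P hP))
      ⟨2 ^ P.ncard - 1, Nat.sub_lt (Npos P) one_pos⟩)

lemma eS_empty : eS P hP (Tempty P hP) = ⟨2 ^ P.ncard - 1, Nat.sub_lt (Npos P) one_pos⟩ := by
  simp [eS]

/-- Encode a machine index and a subset of `P` as a machine index of the new SHSM. -/
noncomputable def enc (i : Fin M.h) (s : T P hP) : Fin (M.h * 2 ^ P.ncard) :=
  ⟨i.1 * 2 ^ P.ncard + (eS P hP s).1, by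
    have h1 : i.1 * 2 ^ P.ncard + (eS P hP s).1 < (i.1 + 1) * 2 ^ P.ncard := by
      have := (eS P hP s).2
      calc i.1 * 2 ^ P.ncard + (eS P hP s).1 < i.1 * 2 ^ P.ncard + 2 ^ P.ncard := by omega
        _ = (i.1 + 1) * 2 ^ P.ncard := by ring
    exact lt_of_lt_of_le h1 (Nat.mul_le_mul_right _ i.2)⟩

/-- The machine-index component. -/
noncomputable def idx (x : Fin (M.h * 2 ^ P.ncard)) : Fin M.h :=
  ⟨x.1 / 2 ^ P.ncard, by
    rw [Nat.div_lt_iff_lt_mul (Npos P)]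
    exact x.2⟩

/-- The subset-of-`P` component. -/
noncomputable def sub (x : Fin (M.h * 2 ^ P.ncard)) : T P hP :=
  (eS P hP).symm ⟨x.1 % 2 ^ P.ncard, Nat.mod_lt _ (Npos P)⟩

lemma idx_enc (i : Fin M.h) (s : T P hP) : idx M P (enc M P hP i s) = i := by
  apply Fin.ext
  show (i.1 * 2 ^ P.ncard + (eS P hP s).1) / 2 ^ P.ncard = i.1
  rw [Nat.add_comm, Nat.add_mul_div_right _ _ (Npos P), Nat.div_eq_of_lt (eS P hP s).2]
  omega

lemma sub_enc (i : Fin M.h) (s : T P hP) : sub M P hP (enc M P hP i s) = s := by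
  have hmod : (i.1 * 2 ^ P.ncard + (eS P hP s).1) % 2 ^ P.ncard = (eS P hP s).1 := by
    rw [Nat.add_comm, Nat.add_mul_mod_self_right, Nat.mod_eq_of_lt (eS P hP s).2]
  show (eS P hP).symm _ = s
  have : (⟨(enc M P hP i s).1 % 2 ^ P.ncard, Nat.mod_lt _ (Npos P)⟩ : Fin (2 ^ P.ncard))
      = eS P hP s := by
    apply Fin.ext; exact hmod
  rw [this, Equiv.symm_apply_apply]

lemma hN1 : 1 ≤ 2 ^ P.ncard := Npos P

/-- The set of atomic propositions represented by a subset of `P`. -/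
def Sset (s : T P hP) : Set AP := {p | p ∈ s.1}

lemma Sset_empty : Sset P hP (Tempty P hP) = ∅ := by
  ext p; simp [Sset, Tempty]

/-- Accumulate the `P`-part of the label of `u` into `s`. -/
noncomputable def pushF (i : Fin M.h) (s : T P hP) (u : M.V i) : T P hP :=
  ⟨s.1 ∪ hP.toFinset.filter (fun p => p ∈ M.label i u), by
    rw [Finset.mem_powerset]
    exact Finset.union_subset (Finset.mem_powerset.mp s.2) (Finset.filter_subset _ _)⟩

lemma Sset_pushF (i : Fin M.h) (s : T P hP) (u : M.V i) :
    Sset P hP (pushF M P hP i s u) = Sset P hP s ∪ (M.label i u ∩ P) := by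
  ext p
  simp only [Sset, pushF, Finset.mem_union, Finset.mem_filter, Set.Finite.mem_toFinset,
    Set.mem_setOf_eq, Set.mem_union, Set.mem_inter_iff]
  tauto

/-- The HSM `M'`. -/
noncomputable def MH : SHSM AP where
  h := M.h * 2 ^ P.ncard
  hpos := Nat.mul_pos M.hpos (Npos P)
  V x := M.V (idx M P x)
  Vfin x := M.Vfin _
  init x := M.init (idx M P x)
  out x := M.out (idx M P x)
  label x u :=
    if M.expand (idx M P x) u = none then M.label (idx M P x) u ∪ Sset P hP (sub M P hP x)
    else ∅
  expand x u :=
    (M.expand (idx M P x) u).map (fun j => enc M P hP j (pushF M P hP (idx M P x) (sub M P hP x) u))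
  expand_lt := by
    intro x u y hy
    simp only [Option.map_eq_some_iff] at hy
    obtain ⟨j, hj, rfl⟩ := hy
    have hjlt : j.1 < (idx M P x).1 := M.expand_lt _ _ _ hj
    set t := eS P hP (pushF M P hP (idx M P x) (sub M P hP x) u) with ht
    show j.1 * 2 ^ P.ncard + t.1 < x.1
    have h0 : t.1 < 2 ^ P.ncard := t.2
    have he : (j.1 + 1) * 2 ^ P.ncard = j.1 * 2 ^ P.ncard + 2 ^ P.ncard := by ring
    have h2 : (j.1 + 1) * 2 ^ P.ncard ≤ (x.1 / 2 ^ P.ncard) * 2 ^ P.ncard :=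
      Nat.mul_le_mul_right _ hjlt
    have h3 : (x.1 / 2 ^ P.ncard) * 2 ^ P.ncard ≤ x.1 := Nat.div_mul_le_self _ _
    omega
  init_node := by intro x; simp [M.init_node]
  out_node := by intro x z hz; simp [M.out_node _ _ hz]
  Eplain x u v := M.Eplain (idx M P x) u v
  Ebox x u y z v :=
    (M.expand (idx M P x) u).map
      (fun j => enc M P hP j (pushF M P hP (idx M P x) (sub M P hP x) u)) = some y ∧
    M.Ebox (idx M P x) u (idx M P y) z v
  Eplain_node := by intro x u v h; simp [M.Eplain_node _ _ _ h]
  Ebox_ok := by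
    intro x u y z v h
    exact ⟨h.1, (M.Ebox_ok _ _ _ _ _ h.2).2⟩

variable {M P hP}

lemma expand'_eq (x : Fin (MH M P hP).h) (u : (MH M P hP).V x) :
    (MH M P hP).expand x u =
      (M.expand (idx M P x) u).map
        (fun j => enc M P hP j (pushF M P hP (idx M P x) (sub M P hP x) u)) := rfl

lemma node_iff {x : Fin (MH M P hP).h} {u : (MH M P hP).V x} :
    (MH M P hP).expand x u = none ↔ M.expand (idx M P x) u = none := by
  rw [expand'_eq]; exact Option.map_eq_none_iff

/-- The renaming of vertices: forget the subset component. -/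
noncomputable def rho (e : (MH M P hP).Vt) : M.Vt := ⟨idx M P e.1, e.2⟩

lemma isNode_rho (e : (MH M P hP).Vt) : (MH M P hP).IsNode e ↔ M.IsNode (rho e) := by
  obtain ⟨x, u⟩ := e
  exact node_iff

lemma expand'_some {x y : Fin (MH M P hP).h} {u : (MH M P hP).V x}
    (h : (MH M P hP).expand x u = some y) :
    M.expand (idx M P x) u = some (idx M P y) ∧
      sub M P hP y = pushF M P hP (idx M P x) (sub M P hP x) u := by
  rw [expand'_eq] at h
  replace h := Option.map_eq_some_iff.mp h
  obtain ⟨j, hj, rfl⟩ := h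
  rw [idx_enc, sub_enc]
  exact ⟨hj, rfl⟩

lemma step_rho {a b : (MH M P hP).Vt} (h : (MH M P hP).stepRel a b) :
    M.stepRel (rho a) (rho b) := by
  obtain ⟨x, u⟩ := a
  exact (expand'_some h).1

lemma idx_top : idx M P (MH M P hP).top = M.top := by
  apply Fin.ext
  show (M.h * 2 ^ P.ncard - 1) / 2 ^ P.ncard = M.h - 1
  obtain ⟨a, ha⟩ : ∃ a, M.h = a + 1 := ⟨M.h - 1, by have := M.hpos; omega⟩
  have hN := Npos P
  rw [ha]
  have h1 : (a + 1) * 2 ^ P.ncard - 1 = (2 ^ P.ncard - 1) + a * 2 ^ P.ncard := by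
    have : (a + 1) * 2 ^ P.ncard = a * 2 ^ P.ncard + 2 ^ P.ncard := by ring
    omega
  rw [h1, Nat.add_mul_div_right _ _ hN, Nat.div_eq_of_lt (by omega)]
  omega

lemma sub_top : sub M P hP (MH M P hP).top = Tempty P hP := by
  show (eS P hP).symm _ = _
  have hN := Npos P
  obtain ⟨a, ha⟩ : ∃ a, M.h = a + 1 := ⟨M.h - 1, by have := M.hpos; omega⟩
  have hmod : ((MH M P hP).top.1 : ℕ) % 2 ^ P.ncard = 2 ^ P.ncard - 1 := by
    show (M.h * 2 ^ P.ncard - 1) % 2 ^ P.ncard = 2 ^ P.ncard - 1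
    rw [ha]
    have h1 : (a + 1) * 2 ^ P.ncard - 1 = (2 ^ P.ncard - 1) + a * 2 ^ P.ncard := by
      have : (a + 1) * 2 ^ P.ncard = a * 2 ^ P.ncard + 2 ^ P.ncard := by ring
      omega
    rw [h1, Nat.add_mul_mod_self_right, Nat.mod_eq_of_lt (by omega)]
  rw [Equiv.symm_apply_eq, eS_empty]
  apply Fin.ext
  exact hmod

lemma enc_top : enc M P hP M.top (Tempty P hP) = (MH M P hP).top := by
  apply Fin.ext
  show (M.top.1 : ℕ) * 2 ^ P.ncard + (eS P hP (Tempty P hP)).1 = M.h * 2 ^ P.ncard - 1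
  rw [eS_empty]
  show (M.h - 1) * 2 ^ P.ncard + (2 ^ P.ncard - 1) = M.h * 2 ^ P.ncard - 1
  have hN := Npos P
  obtain ⟨a, ha⟩ : ∃ a, M.h = a + 1 := ⟨M.h - 1, by have := M.hpos; omega⟩
  rw [ha]
  have : (a + 1) * 2 ^ P.ncard = a * 2 ^ P.ncard + 2 ^ P.ncard := by ring
  simp only [Nat.add_sub_cancel]
  omega

section Lift

/-- Casting a vertex of `M` to the corresponding vertex of `MH`. -/
def castV (i : Fin M.h) (s : T P hP) (u : M.V i) : (MH M P hP).V (enc M P hP i s) :=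
  cast (congrArg M.V (idx_enc M P hP i s).symm) u

lemma cast_apply {x : Fin (M.h * 2 ^ P.ncard)} {i : Fin M.h} (h : idx M P x = i) (u : M.V i)
    {γ : Sort*} (F : ∀ j, M.V j → γ) :
    F (idx M P x) (cast (congrArg M.V h.symm) u) = F i u := by
  subst h; rfl

lemma rho_castV (i : Fin M.h) (s : T P hP) (u : M.V i) :
    rho (⟨enc M P hP i s, castV i s u⟩ : (MH M P hP).Vt) = ⟨i, u⟩ := by
  apply Sigma.ext
  · exact idx_enc M P hP i s
  · exact cast_heq _ _

lemma expand'_castV (i : Fin M.h) (s : T P hP) (u : M.V i) :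
    (MH M P hP).expand (enc M P hP i s) (castV i s u) =
      (M.expand i u).map (fun j => enc M P hP j (pushF M P hP i s u)) := by
  refine (expand'_eq (M := M) (P := P) (hP := hP) (enc M P hP i s) (castV i s u)).trans ?_
  rw [sub_enc]
  exact cast_apply (idx_enc M P hP i s) u
    (fun k w => (M.expand k w).map (fun j => enc M P hP j (pushF M P hP k s w)))

end Lift

lemma map_eq_one {α β : Type*} {f : α → β} {t : List α} {c : β} (h : t.map f = [c]) :
    ∃ e, t = [e] ∧ f e = c := by
  match t with
  | [] => simp at h
  | e :: t' =>
    simp only [List.map_cons, List.cons.injEq, List.map_eq_nil_iff] at h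
    exact ⟨e, by simp [h.1, h.2], h.1⟩

lemma map_eq_two {α β : Type*} {f : α → β} {t : List α} {c d : β} (h : t.map f = [c, d]) :
    ∃ e₁ e₂, t = [e₁, e₂] ∧ f e₁ = c ∧ f e₂ = d := by
  match t with
  | [] => simp at h
  | [e] => simp at h
  | e₁ :: e₂ :: t' =>
    simp only [List.map_cons, List.cons.injEq, List.map_eq_nil_iff] at h
    exact ⟨e₁, e₂, by simp [h.1, h.2.1, h.2.2], h.1, h.2.1⟩

/-- Determinism: a chain of `MH` is determined by its image under `rho` and the
machine index of its head. -/
lemma det : ∀ (l₁ l₂ : List (MH M P hP).Vt), l₁.Chain' (MH M P hP).stepRel →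
    l₂.Chain' (MH M P hP).stepRel → l₁.map rho = l₂.map rho →
    (∀ a ∈ l₁.head?, ∀ b ∈ l₂.head?, a.1 = b.1) → l₁ = l₂ := by
  intro l₁
  induction l₁ with
  | nil => intro l₂ _ _ hm _; simpa using hm.symm
  | cons a l₁ ih =>
    intro l₂ h1 h2 hm hh
    match l₂ with
    | [] => simp at hm
    | b :: l₂ =>
      obtain ⟨x, u⟩ := a
      obtain ⟨y, v⟩ := b
      have hxy : x = y := hh _ rfl _ rfl
      subst hxy
      simp only [List.map_cons, List.cons.injEq] at hm
      have huv : u = v := by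
        have h := hm.1
        simp only [rho] at h
        exact sigma_mk_injective (β := fun i => M.V i) h
      subst huv
      unfold List.Chain' at h1 h2
      rw [List.isChain_cons] at h1 h2
      have htail : l₁ = l₂ := by
        apply ih l₂ h1.2 h2.2 hm.2
        intro c hc d hd
        have hc' := h1.1 c hc
        have hd' := h2.1 d hd
        have : some c.1 = some d.1 := hc'.symm.trans hd'
        exact Option.some.inj this
      rw [htail]

/-- Prefix determinism for two complete sequences of `MH` with matching prefixes. -/
lemma prefix_det {X Y : List (MH M P hP).Vt} (hX : (MH M P hP).Complete X)
    (hY : (MH M P hP).Complete Y)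
    {p q : List (MH M P hP).Vt} {x y : Fin (MH M P hP).h}
    {u : (MH M P hP).V x} {v : (MH M P hP).V y} {tX tY : List (MH M P hP).Vt}
    (hXe : X = p ++ ⟨x, u⟩ :: tX) (hYe : Y = q ++ ⟨y, v⟩ :: tY)
    (himg : p.map rho = q.map rho) : p = q ∧ x = y := by
  obtain ⟨⟨_, hXc⟩, ⟨zX, hzX, hzX1⟩, _⟩ := hX
  obtain ⟨⟨_, hYc⟩, ⟨zY, hzY, hzY1⟩, _⟩ := hY
  rw [hXe] at hXc hzX
  rw [hYe] at hYc hzY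
  unfold List.Chain' at hXc hYc
  rw [List.isChain_append] at hXc hYc
  have hpq : p = q := by
    apply det p q hXc.1 hYc.1 himg
    intro a ha b hb
    have hpne : p ≠ [] := by intro h; rw [h] at ha; simp at ha
    have hqne : q ≠ [] := by intro h; rw [h] at hb; simp at hb
    have haX : (p ++ ⟨x, u⟩ :: tX).head? = some a := by
      rw [List.head?_append_of_ne_nil _ hpne]; exact ha
    have hbY : (q ++ ⟨y, v⟩ :: tY).head? = some b := by
      rw [List.head?_append_of_ne_nil _ hqne]; exact hb
    rw [haX] at hzX; rw [hbY] at hzY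
    rw [← Option.some.inj hzX] at hzX1
    rw [← Option.some.inj hzY] at hzY1
    rw [hzX1, hzY1]
  subst hpq
  refine ⟨rfl, ?_⟩
  match p with
  | [] =>
    simp only [List.nil_append, List.head?_cons] at hzX hzY
    rw [← Option.some.inj hzX] at hzX1
    rw [← Option.some.inj hzY] at hzY1
    simp only at hzX1 hzY1
    rw [hzX1, hzY1]
  | c :: p' =>
    have hlast : ((c :: p').getLast?) = some ((c :: p').getLast (by simp)) := by
      exact List.getLast?_eq_getLast _
    have h1 := hXc.2.2 _ hlast (⟨x, u⟩ : (MH M P hP).Vt) (by simp)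
    have h2 := hYc.2.2 _ hlast (⟨y, v⟩ : (MH M P hP).Vt) (by simp)
    have : some x = some y := h1.symm.trans h2
    exact Option.some.inj this

lemma complete_map {l : List (MH M P hP).Vt} (h : (MH M P hP).Complete l) :
    M.Complete (l.map rho) := by
  obtain ⟨⟨hne, hc⟩, ⟨z, hz, hz1⟩, ⟨w, hw, hwn⟩⟩ := h
  refine ⟨⟨by simpa using hne, List.isChain_map_of_isChain rho (fun a b hab => step_rho hab) hc⟩,
    ⟨rho z, ?_, ?_⟩, ⟨rho w, ?_, ?_⟩⟩
  · rw [List.head?_map, hz]; rfl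
  · show idx M P z.1 = M.top
    rw [hz1]; exact idx_top
  · rw [List.getLast?_map, hw]; rfl
  · exact (isNode_rho w).mp hwn

/-- Lifting a chain of `M` to a chain of `MH` starting at a prescribed subset. -/
lemma lift_ex : ∀ (l : List M.Vt), l.Chain' M.stepRel →
    ∀ (i : Fin M.h) (u : M.V i), l.head? = some ⟨i, u⟩ → ∀ s : T P hP,
    ∃ l' : List (MH M P hP).Vt, l'.Chain' (MH M P hP).stepRel ∧ l'.map rho = l ∧
      l'.head? = some ⟨enc M P hP i s, castV i s u⟩ := by
  intro l
  induction l with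
  | nil => intro _ i u h _; simp at h
  | cons a rest ih =>
    intro hc i u hh s
    have ha : a = ⟨i, u⟩ := by simpa using hh
    subst ha
    match rest, hc with
    | [], _ =>
      exact ⟨[⟨enc M P hP i s, castV i s u⟩], List.isChain_singleton _, by simp [rho_castV], rfl⟩
    | ⟨j, v⟩ :: rest', hc =>
      unfold List.Chain' at hc
      rw [List.isChain_cons_cons] at hc
      have hstep : M.expand i u = some j := hc.1
      obtain ⟨l'', hch'', hmap'', hhd''⟩ :=
        ih hc.2 j v rfl (pushF M P hP i s u)
      refine ⟨⟨enc M P hP i s, castV i s u⟩ :: l'', ?_, ?_, rfl⟩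
      · refine List.isChain_cons.mpr ?_
        refine ⟨?_, hch''⟩
        intro c hcmem
        rw [hhd''] at hcmem
        rw [← Option.some.inj hcmem]
        show (MH M P hP).expand (enc M P hP i s) (castV i s u) = some (enc M P hP j _)
        rw [expand'_castV, hstep]
        rfl
      · simp only [List.map_cons, hmap'', rho_castV]

/-- The renaming of states. -/
noncomputable def g (X : (MH M P hP).States) : M.States :=
  ⟨X.1.map rho, complete_map X.2⟩

lemma g_inj : Function.Injective (g (M := M) (P := P) (hP := hP)) := by
  intro X Y h
  apply Subtype.ext
  obtain ⟨⟨_, hXc⟩, ⟨zX, hzX, hzX1⟩, _⟩ := X.2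
  obtain ⟨⟨_, hYc⟩, ⟨zY, hzY, hzY1⟩, _⟩ := Y.2
  apply det X.1 Y.1 hXc hYc (congrArg Subtype.val h)
  intro a ha b hb
  rw [ha] at hzX
  rw [hb] at hzY
  rw [← Option.some.inj hzX] at hzX1
  rw [← Option.some.inj hzY] at hzY1
  rw [hzX1, hzY1]

lemma g_surj : Function.Surjective (g (M := M) (P := P) (hP := hP)) := by
  intro Y
  obtain ⟨⟨hne, hc⟩, ⟨z, hz, hz1⟩, ⟨w, hw, hwn⟩⟩ := Y.2
  obtain ⟨i, u⟩ := z
  simp only at hz1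
  subst hz1
  obtain ⟨l', hch, hmap, hhd⟩ := lift_ex Y.1 hc M.top u hz (Tempty P hP)
  have hlast : ∃ b, l'.getLast? = some b ∧ (MH M P hP).IsNode b := by
    have : (l'.map rho).getLast? = some w := by rw [hmap, hw]
    rw [List.getLast?_map, Option.map_eq_some_iff] at this
    obtain ⟨b, hb, hb2⟩ := this
    exact ⟨b, hb, (isNode_rho b).mpr (hb2 ▸ hwn)⟩
  refine ⟨⟨l', ⟨⟨?_, hch⟩, ⟨⟨enc M P hP M.top (Tempty P hP), castV M.top (Tempty P hP) u⟩,
    hhd, enc_top⟩, hlast⟩⟩, ?_⟩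
  · intro h; rw [h] at hhd; simp at hhd
  · exact Subtype.ext hmap

/-- The bijection of states. -/
noncomputable def fEquiv : (MH M P hP).States ≃ M.States :=
  Equiv.ofBijective g ⟨g_inj, g_surj⟩

lemma fEquiv_apply (X : (MH M P hP).States) :
    ((fEquiv (M := M) (P := P) (hP := hP)) X).1 = X.1.map rho := rfl

lemma flatLabel_nil (M₀ : SHSM AP) : M₀.flatLabel [] = ∅ := by
  ext p; simp [SHSM.flatLabel]

lemma flatLabel_cons (M₀ : SHSM AP) (a : M₀.Vt) (l : List M₀.Vt) :
    M₀.flatLabel (a :: l) = M₀.label a.1 a.2 ∪ M₀.flatLabel l := by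
  ext p
  simp only [SHSM.flatLabel, Set.mem_setOf_eq, List.mem_cons, Set.mem_union]
  constructor
  · rintro ⟨x, (rfl | hx), hp⟩
    · exact Or.inl hp
    · exact Or.inr ⟨x, hx, hp⟩
  · rintro (hp | ⟨x, hx, hp⟩)
    · exact ⟨a, Or.inl rfl, hp⟩
    · exact ⟨x, Or.inr hx, hp⟩

lemma label_inv : ∀ (l : List (MH M P hP).Vt), l.Chain' (MH M P hP).stepRel →
    ∀ (x : Fin (MH M P hP).h) (u : (MH M P hP).V x), l.head? = some ⟨x, u⟩ →
    (∀ e ∈ l.getLast?, (MH M P hP).IsNode e) →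
    (MH M P hP).flatLabel l ∩ P =
      (Sset P hP (sub M P hP x) ∪ M.flatLabel (l.map rho)) ∩ P := by
  intro l
  induction l with
  | nil => intro _ x u h _; simp at h
  | cons a rest ih =>
    intro hc x u hh hlast
    have ha : a = ⟨x, u⟩ := by simpa using hh
    subst ha
    match rest with
    | [] =>
      have hnode : (MH M P hP).IsNode ⟨x, u⟩ := hlast _ (by simp)
      have hnone : M.expand (idx M P x) u = none := node_iff.mp hnode
      have hlab : (MH M P hP).label x u = M.label (idx M P x) u ∪ Sset P hP (sub M P hP x) := by
        show (if _ then _ else _) = _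
        rw [if_pos hnone]
      rw [flatLabel_cons, flatLabel_nil, Set.union_empty, hlab, List.map_cons, List.map_nil,
        flatLabel_cons, flatLabel_nil, Set.union_empty]
      show (M.label (idx M P x) u ∪ Sset P hP (sub M P hP x)) ∩ P
        = (Sset P hP (sub M P hP x) ∪ M.label (idx M P x) u) ∩ P
      rw [Set.union_comm]
    | b :: rest' =>
      unfold List.Chain' at hc
      rw [List.isChain_cons] at hc
      have hstep : (MH M P hP).stepRel ⟨x, u⟩ b := hc.1 _ rfl
      obtain ⟨hexp, hsub⟩ := expand'_some hstep
      have hbox : (MH M P hP).label x u = ∅ := by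
        show (if _ then _ else _) = _
        rw [if_neg (by simp [hexp])]
      obtain ⟨y, v⟩ := b
      have ihh := ih hc.2 y v rfl (by
        intro e he
        apply hlast
        rwa [List.getLast?_cons_cons])
      rw [flatLabel_cons, hbox, Set.empty_union, ihh, hsub]
      simp only [Sset_pushF]
      simp only [List.map_cons, flatLabel_cons]
      ext p
      simp only [Set.mem_inter_iff, Set.mem_union, rho,
        Sset_pushF M P hP (idx M P x) (sub M P hP x) u]
      tauto

lemma label_state {X : List (MH M P hP).Vt} (hX : (MH M P hP).Complete X) :
    (MH M P hP).flatLabel X ∩ P = M.flatLabel (X.map rho) ∩ P := by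
  obtain ⟨⟨hne, hc⟩, ⟨z, hz, hz1⟩, ⟨w, hw, hwn⟩⟩ := hX
  obtain ⟨x, u⟩ := z
  simp only at hz1
  subst hz1
  have := label_inv X hc _ u hz (by intro e he; rw [hw] at he; rwa [← Option.some.inj he])
  rw [this, sub_top, Sset_empty, Set.empty_union]

lemma trans_forward {X Y : List (MH M P hP).Vt} (hT : (MH M P hP).FlatTrans X Y) :
    M.FlatTrans (X.map rho) (Y.map rho) := by
  rcases hT with ⟨p, x, a, b, hX, hY, hE, hb⟩ | ⟨p, x, a, b, y, hX, hY, hE, hb⟩ |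
    ⟨p, x, a, y, z, v, hX, hY, hE, hv⟩ | ⟨p, x, a, y, z, b, y', hX, hY, hE, hb⟩
  · refine Or.inl ⟨p.map rho, idx M P x, a, b, ?_, ?_, hE, node_iff.mp hb⟩
    · rw [hX]; simp [rho]
    · rw [hY]; simp [rho]
  · refine Or.inr (Or.inl
      ⟨p.map rho, idx M P x, a, b, idx M P y, ?_, ?_, hE, (expand'_some hb).1⟩)
    · rw [hX]; simp [rho]
    · rw [hY]; simp [rho]; exact rfl
  · refine Or.inr (Or.inr (Or.inl
      ⟨p.map rho, idx M P x, a, idx M P y, z, v, ?_, ?_, hE.2, node_iff.mp hv⟩))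
    · rw [hX]; simp [rho]
    · rw [hY]; simp [rho]
  · refine Or.inr (Or.inr (Or.inr
      ⟨p.map rho, idx M P x, a, idx M P y, z, b, idx M P y', ?_, ?_, hE.2,
        (expand'_some hb).1⟩))
    · rw [hX]; simp [rho]
    · rw [hY]; simp [rho]; exact rfl

lemma trans_backward {X Y : List (MH M P hP).Vt} (hX : (MH M P hP).Complete X)
    (hY : (MH M P hP).Complete Y) (hT : M.FlatTrans (X.map rho) (Y.map rho)) :
    (MH M P hP).FlatTrans X Y := by
  rcases hT with ⟨p, i, a, b, hX1, hY1, hE, hb⟩ | ⟨p, i, a, b, j, hX1, hY1, hE, hb⟩ |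
    ⟨p, i, a, j, z, v, hX1, hY1, hE, hv⟩ | ⟨p, i, a, j, z, b, j', hX1, hY1, hE, hb⟩
  · -- node to node
    rw [List.map_eq_append_iff] at hX1 hY1
    obtain ⟨p₁, t₁, rfl, hp₁, ht₁⟩ := hX1
    obtain ⟨q₁, t₂, rfl, hq₁, ht₂⟩ := hY1
    obtain ⟨⟨x, a'⟩, rfl, hρ1⟩ := map_eq_one ht₁
    simp only [rho] at hρ1
    have hi : idx M P x = i := congrArg Sigma.fst hρ1
    subst hi
    have ha' : a = a' := (sigma_mk_injective (β := fun i => M.V i) hρ1).symm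
    subst ha'
    obtain ⟨⟨y, b'⟩, rfl, hρ2⟩ := map_eq_one ht₂
    simp only [rho] at hρ2
    obtain ⟨hpq, hxy⟩ := prefix_det hX hY rfl rfl (hp₁.trans hq₁.symm)
    subst hpq
    subst hxy
    have hb' : b = b' := (sigma_mk_injective (β := fun i => M.V i) hρ2).symm
    subst hb'
    exact Or.inl ⟨p₁, x, a, b, rfl, rfl, hE, node_iff.mpr hb⟩
  · -- node to box
    rw [List.map_eq_append_iff] at hX1 hY1
    obtain ⟨p₁, t₁, rfl, hp₁, ht₁⟩ := hX1
    obtain ⟨q₁, t₂, rfl, hq₁, ht₂⟩ := hY1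
    obtain ⟨⟨x, a'⟩, rfl, hρ1⟩ := map_eq_one ht₁
    simp only [rho] at hρ1
    have hi : idx M P x = i := congrArg Sigma.fst hρ1
    subst hi
    have ha' : a = a' := (sigma_mk_injective (β := fun i => M.V i) hρ1).symm
    subst ha'
    obtain ⟨⟨y₁, b'⟩, ⟨y₂, c⟩, rfl, hρ2, hρ3⟩ := map_eq_two ht₂
    simp only [rho] at hρ2 hρ3
    obtain ⟨hpq, hxy⟩ := prefix_det hX hY rfl rfl (hp₁.trans hq₁.symm)
    subst hpq
    subst hxy
    have hb' : b = b' := (sigma_mk_injective (β := fun i => M.V i) hρ2).symm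
    subst hb'
    have hj : idx M P y₂ = j := congrArg Sigma.fst hρ3
    subst hj
    have hc : c = M.init (idx M P y₂) := sigma_mk_injective (β := fun i => M.V i) hρ3
    subst hc
    have hstep : (MH M P hP).expand x b = some y₂ := by
      have hYc := hY.1.2
      unfold List.Chain' at hYc
      rw [List.isChain_append] at hYc
      have hs := List.isChain_pair.mp hYc.2.1
      exact hs
    exact Or.inr (Or.inl ⟨p₁, x, a, b, y₂, rfl, rfl, hE, hstep⟩)
  · -- box to node
    rw [List.map_eq_append_iff] at hX1 hY1
    obtain ⟨p₁, t₁, rfl, hp₁, ht₁⟩ := hX1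
    obtain ⟨q₁, t₂, rfl, hq₁, ht₂⟩ := hY1
    obtain ⟨⟨x, a'⟩, ⟨y, z'⟩, rfl, hρ1, hρ2⟩ := map_eq_two ht₁
    simp only [rho] at hρ1 hρ2
    have hi : idx M P x = i := congrArg Sigma.fst hρ1
    subst hi
    have ha' : a = a' := (sigma_mk_injective (β := fun i => M.V i) hρ1).symm
    subst ha'
    have hj : idx M P y = j := congrArg Sigma.fst hρ2
    subst hj
    have hz' : z = z' := (sigma_mk_injective (β := fun i => M.V i) hρ2).symm
    subst hz'
    obtain ⟨⟨x₂, v'⟩, rfl, hρ3⟩ := map_eq_one ht₂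
    simp only [rho] at hρ3
    obtain ⟨hpq, hxy⟩ := prefix_det hX hY rfl rfl (hp₁.trans hq₁.symm)
    subst hpq
    subst hxy
    have hv' : v = v' := (sigma_mk_injective (β := fun i => M.V i) hρ3).symm
    subst hv'
    have hstep : (MH M P hP).expand x a = some y := by
      have hXc := hX.1.2
      unfold List.Chain' at hXc
      rw [List.isChain_append] at hXc
      have hs := List.isChain_pair.mp hXc.2.1
      exact hs
    exact Or.inr (Or.inr (Or.inl ⟨p₁, x, a, y, z, v, rfl, rfl, ⟨hstep, hE⟩,
      node_iff.mpr hv⟩))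
  · -- box to box
    rw [List.map_eq_append_iff] at hX1 hY1
    obtain ⟨p₁, t₁, rfl, hp₁, ht₁⟩ := hX1
    obtain ⟨q₁, t₂, rfl, hq₁, ht₂⟩ := hY1
    obtain ⟨⟨x, a'⟩, ⟨y, z'⟩, rfl, hρ1, hρ2⟩ := map_eq_two ht₁
    simp only [rho] at hρ1 hρ2
    have hi : idx M P x = i := congrArg Sigma.fst hρ1
    subst hi
    have ha' : a = a' := (sigma_mk_injective (β := fun i => M.V i) hρ1).symm
    subst ha'
    have hj : idx M P y = j := congrArg Sigma.fst hρ2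
    subst hj
    have hz' : z = z' := (sigma_mk_injective (β := fun i => M.V i) hρ2).symm
    subst hz'
    obtain ⟨⟨x₂, b'⟩, ⟨y₂, c⟩, rfl, hρ3, hρ4⟩ := map_eq_two ht₂
    simp only [rho] at hρ3 hρ4
    obtain ⟨hpq, hxy⟩ := prefix_det hX hY rfl rfl (hp₁.trans hq₁.symm)
    subst hpq
    subst hxy
    have hb' : b = b' := (sigma_mk_injective (β := fun i => M.V i) hρ3).symm
    subst hb'
    have hj' : idx M P y₂ = j' := congrArg Sigma.fst hρ4
    subst hj'
    have hc : c = M.init (idx M P y₂) := sigma_mk_injective (β := fun i => M.V i) hρ4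
    subst hc
    have hstepX : (MH M P hP).expand x a = some y := by
      have hXc := hX.1.2
      unfold List.Chain' at hXc
      rw [List.isChain_append] at hXc
      have hs := List.isChain_pair.mp hXc.2.1
      exact hs
    have hstepY : (MH M P hP).expand x b = some y₂ := by
      have hYc := hY.1.2
      unfold List.Chain' at hYc
      rw [List.isChain_append] at hYc
      have hs := List.isChain_pair.mp hYc.2.1
      exact hs
    exact Or.inr (Or.inr (Or.inr ⟨p₁, x, a, y, z, b, y₂, rfl, rfl, ⟨hstepX, hE⟩, hstepY⟩))

lemma fin_eq_of_div_mod {n : ℕ} {x y : Fin (M.h * 2 ^ P.ncard)}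
    (h1 : idx M P x = idx M P y) (h2 : x.1 % 2 ^ P.ncard = y.1 % 2 ^ P.ncard) : x = y := by
  apply Fin.ext
  have h1' : x.1 / 2 ^ P.ncard = y.1 / 2 ^ P.ncard := congrArg Fin.val h1
  rw [← Nat.div_add_mod x.1 (2 ^ P.ncard), ← Nat.div_add_mod y.1 (2 ^ P.ncard), h1', h2]

lemma card_Vt_le : Fintype.card (MH M P hP).Vt ≤ Fintype.card M.Vt * 2 ^ P.ncard := by
  classical
  have hinj : Function.Injective (fun e : (MH M P hP).Vt =>
      ((rho e, ⟨e.1.1 % 2 ^ P.ncard, Nat.mod_lt _ (Npos P)⟩) : M.Vt × Fin (2 ^ P.ncard))) := by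
    rintro ⟨x, u⟩ ⟨y, v⟩ h
    simp only [Prod.mk.injEq, rho, Fin.mk.injEq] at h
    obtain ⟨h1, h2⟩ := h
    have hxy : x = y := fin_eq_of_div_mod (n := 0) (congrArg Sigma.fst h1) h2
    subst hxy
    have huv : u = v := sigma_mk_injective (β := fun i => M.V i) h1
    rw [huv]
  calc Fintype.card (MH M P hP).Vt ≤ Fintype.card (M.Vt × Fin (2 ^ P.ncard)) :=
        Fintype.card_le_of_injective _ hinj
    _ = Fintype.card M.Vt * 2 ^ P.ncard := by simp

lemma E1_le :
    {e : Σ i : Fin (MH M P hP).h, (MH M P hP).V i × (MH M P hP).V i |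
        (MH M P hP).Eplain e.1 e.2.1 e.2.2}.ncard ≤
      {e : Σ i : Fin M.h, M.V i × M.V i | M.Eplain e.1 e.2.1 e.2.2}.ncard * 2 ^ P.ncard := by
  classical
  rw [← Nat.card_coe_set_eq, ← Nat.card_coe_set_eq]
  set S := {e : Σ i : Fin M.h, M.V i × M.V i | M.Eplain e.1 e.2.1 e.2.2}
  have hinj : Function.Injective
      (fun e : {e : Σ i : Fin (MH M P hP).h, (MH M P hP).V i × (MH M P hP).V i |
          (MH M P hP).Eplain e.1 e.2.1 e.2.2} =>
        ((⟨⟨idx M P e.1.1, e.1.2.1, e.1.2.2⟩, e.2⟩,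
          ⟨e.1.1.1 % 2 ^ P.ncard, Nat.mod_lt _ (Npos P)⟩) :
            ↥S × Fin (2 ^ P.ncard))) := by
    rintro ⟨⟨x, u, v⟩, he⟩ ⟨⟨x', u', v'⟩, he'⟩ h
    simp only [Prod.mk.injEq, Subtype.mk.injEq, Fin.mk.injEq] at h
    obtain ⟨h1, h2⟩ := h
    replace h1 : (⟨idx M P x, (u, v)⟩ : Σ i : Fin M.h, M.V i × M.V i) = ⟨idx M P x', (u', v')⟩ :=
      congrArg Subtype.val h1
    have hxy : x = x' := fin_eq_of_div_mod (n := 0) (congrArg Sigma.fst h1) h2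
    subst hxy
    have hp : (u, v) = (u', v') := sigma_mk_injective (β := fun i => M.V i × M.V i) h1
    apply Subtype.ext
    show (⟨x, (u, v)⟩ : Σ i : Fin (MH M P hP).h, (MH M P hP).V i × (MH M P hP).V i)
      = ⟨x, (u', v')⟩
    rw [hp]
  calc Nat.card {e : Σ i : Fin (MH M P hP).h, (MH M P hP).V i × (MH M P hP).V i |
          (MH M P hP).Eplain e.1 e.2.1 e.2.2}
      ≤ Nat.card (↥S × Fin (2 ^ P.ncard)) := Nat.card_le_card_of_injective _ hinj
    _ = Nat.card ↥S * 2 ^ P.ncard := by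
        simp [Nat.card_prod]

lemma E2_le :
    {e : Σ (i : Fin (MH M P hP).h) (j : Fin (MH M P hP).h),
          (MH M P hP).V i × (MH M P hP).V j × (MH M P hP).V i |
        (MH M P hP).Ebox e.1 e.2.2.1 e.2.1 e.2.2.2.1 e.2.2.2.2}.ncard ≤
      {e : Σ (i : Fin M.h) (j : Fin M.h), M.V i × M.V j × M.V i |
        M.Ebox e.1 e.2.2.1 e.2.1 e.2.2.2.1 e.2.2.2.2}.ncard * 2 ^ P.ncard := by
  classical
  rw [← Nat.card_coe_set_eq, ← Nat.card_coe_set_eq]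
  set S := {e : Σ (i : Fin M.h) (j : Fin M.h), M.V i × M.V j × M.V i |
    M.Ebox e.1 e.2.2.1 e.2.1 e.2.2.2.1 e.2.2.2.2}
  set S' := {e : Σ (i : Fin (MH M P hP).h) (j : Fin (MH M P hP).h),
      (MH M P hP).V i × (MH M P hP).V j × (MH M P hP).V i |
    (MH M P hP).Ebox e.1 e.2.2.1 e.2.1 e.2.2.2.1 e.2.2.2.2} with hS'
  have hinj : Function.Injective (fun e : ↥S' =>
      ((⟨⟨idx M P e.1.1, idx M P e.1.2.1, e.1.2.2⟩, e.2.2⟩,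
        ⟨e.1.1.1 % 2 ^ P.ncard, Nat.mod_lt _ (Npos P)⟩) : ↥S × Fin (2 ^ P.ncard))) := by
    rintro ⟨⟨x, y, u, z, v⟩, he⟩ ⟨⟨x', y', u', z', v'⟩, he'⟩ h
    simp only [Prod.mk.injEq, Subtype.mk.injEq, Fin.mk.injEq] at h
    obtain ⟨h1, h2⟩ := h
    have hxy : x = x' := fin_eq_of_div_mod (n := 0) (congrArg Sigma.fst h1) h2
    subst hxy
    have hinner : (⟨idx M P y, (u, z, v)⟩ :
        Σ j : Fin M.h, M.V (idx M P x) × M.V j × M.V (idx M P x)) = ⟨idx M P y', (u', z', v')⟩ :=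
      sigma_mk_injective (β := fun i => Σ j : Fin M.h, M.V i × M.V j × M.V i) h1
    have hu : u = u' := congrArg
      (fun w : Σ j : Fin M.h, M.V (idx M P x) × M.V j × M.V (idx M P x) => w.2.1) hinner
    subst hu
    have hy : y = y' := by
      have e1 := he.1
      have e2 := he'.1
      exact Option.some.inj (e1.symm.trans e2)
    subst hy
    have htrip : ((u, z, v) : M.V (idx M P x) × M.V (idx M P y) × M.V (idx M P x))
        = (u, z', v') :=
      sigma_mk_injective (β := fun j => M.V (idx M P x) × M.V j × M.V (idx M P x)) hinner
    apply Subtype.ext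
    show (⟨x, ⟨y, (u, z, v)⟩⟩ : Σ (i : Fin (MH M P hP).h) (j : Fin (MH M P hP).h),
        (MH M P hP).V i × (MH M P hP).V j × (MH M P hP).V i) = ⟨x, ⟨y, (u, z', v')⟩⟩
    rw [← htrip]
    rfl
  calc Nat.card ↥S' ≤ Nat.card (↥S × Fin (2 ^ P.ncard)) :=
        Nat.card_le_card_of_injective _ hinj
    _ = Nat.card ↥S * 2 ^ P.ncard := by
        simp [Nat.card_prod]

lemma size_le : (MH M P hP).size ≤ M.size * 2 ^ P.ncard := by
  have h1 := card_Vt_le (M := M) (P := P) (hP := hP)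
  have h2 := E1_le (M := M) (P := P) (hP := hP)
  have h3 := E2_le (M := M) (P := P) (hP := hP)
  unfold SHSM.size
  rw [add_mul, add_mul]
  exact add_le_add (add_le_add h1 h2) h3

end ShsmToHsm

/-- For every SHSM `M` over `AP` and every finite set `P ⊆ AP` of atomic propositions,
there is an HSM `M'` over `AP` with at most `h·2^{|P|}` machines and size at most
`|M|·2^{|P|}` whose flat Kripke structure is isomorphic to `M^F` up to a renaming of the
states, with labels agreeing on all atomic propositions in `P`. -/
theorem shsm_to_hsm {AP : Type} (M : SHSM AP) (P : Set AP) (hP : P.Finite) :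
    ∃ M' : SHSM AP, M'.IsHSM ∧
      M'.h ≤ M.h * 2 ^ P.ncard ∧
      M'.size ≤ M.size * 2 ^ P.ncard ∧
      ∃ f : M'.States ≃ M.States,
        f ⟨M'.initSeq, M'.initSeq_complete⟩ = ⟨M.initSeq, M.initSeq_complete⟩ ∧
        (∀ X Y : M'.States, M'.FlatTrans X.1 Y.1 ↔ M.FlatTrans (f X).1 (f Y).1) ∧
        (∀ X : M'.States, M'.flatLabel X.1 ∩ P = M.flatLabel (f X).1 ∩ P) := by
  classical
  refine ⟨ShsmToHsm.MH M P hP, ?_, le_refl _, ShsmToHsm.size_le, ShsmToHsm.fEquiv, ?_, ?_, ?_⟩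
  · intro x u hne
    show (if _ then _ else _) = ∅
    rw [if_neg (fun h => hne (ShsmToHsm.node_iff.mpr h))]
  · apply Subtype.ext
    show (ShsmToHsm.MH M P hP).initSeq.map ShsmToHsm.rho = M.initSeq
    show ([⟨ShsmToHsm.idx M P (ShsmToHsm.MH M P hP).top,
      M.init (ShsmToHsm.idx M P (ShsmToHsm.MH M P hP).top)⟩] : List M.Vt)
      = [⟨M.top, M.init M.top⟩]
    rw [ShsmToHsm.idx_top]
  · intro X Y
    exact ⟨fun h => ShsmToHsm.trans_forward h, fun h => ShsmToHsm.trans_backward X.2 Y.2 h⟩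
  · intro X
    exact ShsmToHsm.label_state X.2
end

section
/- Let G be a finite directed graph and s a vertex of G from which no non-sink-cycle (cycle containing some vertex of out-degree at least 2) is reachable. Then every infinite path in G starting at s eventually remains forever within a single sink-cycle, i.e., there is an index N and a sink-cycle C such that all vertices of the path from position N on lie on C. -/
/-- In a finite directed graph, if no non-sink-cycle is reachable from `s`, then every
infinite path starting at `s` eventually remains forever within a single sink-cycle. -/
theorem no_nonSinkCycle_path_eventually_in_sinkCycle {V : Type} [Fintype V]
    (R : V → V → Prop) (s : V)
    (hno : ¬ ∃ (l : List V) (v : V), IsNonSinkCycle R l ∧ v ∈ l ∧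
      Relation.ReflTransGen R s v)
    (π : ℕ → V) (h0 : π 0 = s) (hπ : ∀ n, R (π n) (π (n + 1))) :
    ∃ (N : ℕ) (C : List V), IsSinkCycle R C ∧ ∀ n, N ≤ n → π n ∈ C := by
  -- every vertex on the path is reachable from s
  have hreach : ∀ n, Relation.ReflTransGen R s (π n) := by
    intro n
    induction n with
    | zero => rw [h0]
    | succ n ih => exact ih.tail (hπ n)
  -- pigeonhole: there is a repeat
  have hrep : ∃ d, 0 < d ∧ ∃ m, π m = π (m + d) := by
    obtain ⟨i, j, hij, heq⟩ := Fintype.exists_ne_map_eq_of_card_lt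
      (fun i : Fin (Fintype.card V + 1) => π i) (by simp)
    rcases lt_or_gt_of_ne hij with h | h
    · exact ⟨j - i, Nat.sub_pos_of_lt h, i, by
        rw [Nat.add_sub_cancel' h.le]; exact heq⟩
    · exact ⟨i - j, Nat.sub_pos_of_lt h, j, by
        rw [Nat.add_sub_cancel' h.le]; exact heq.symm⟩
  classical
  obtain ⟨hdpos, m, hm⟩ := Nat.find_spec hrep
  obtain ⟨d', hd⟩ : ∃ d', Nat.find hrep = d' + 1 :=
    ⟨Nat.find hrep - 1, (Nat.succ_pred_eq_of_pos hdpos).symm⟩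
  rw [hd] at hm
  set l : List V := (List.range (d' + 1)).map (fun i => π (m + i)) with hl
  have hmem : ∀ v, v ∈ l ↔ ∃ i < d' + 1, π (m + i) = v := by
    intro v; simp [hl, List.mem_map]
  -- no smaller repeat
  have hmin : ∀ i j, i < j → j < d' + 1 → π (m + i) ≠ π (m + j) := by
    intro i j hij hj hEq
    have hlt : j - i < d' + 1 := lt_of_le_of_lt (Nat.sub_le _ _) hj
    exact Nat.find_min hrep (by rw [hd]; exact hlt)
      ⟨Nat.sub_pos_of_lt hij, m + i, by
        have h' : m + i + (j - i) = m + j := by omega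
        rw [h']; exact hEq⟩
  have hnodup : l.Nodup := by
    rw [hl]
    refine List.Nodup.map_on ?_ List.nodup_range
    intro i hi j hj hEq
    simp only [List.mem_range] at hi hj
    by_contra hne
    rcases lt_or_gt_of_ne hne with h | h
    · exact hmin i j h hj hEq
    · exact hmin j i h hi hEq.symm
  have hchain : l.Chain' R := by
    rw [hl, List.Chain', List.isChain_map, List.isChain_range_succ]
    intro i hi
    exact hπ (m + i)
  have hhead : l.head? = some (π m) := by
    rw [hl, List.range_succ_eq_map]
    simp
  have hlast : l.getLast? = some (π (m + d')) := by
    rw [hl, List.range_succ, List.map_append]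
    simp
  have hcyc : IsCycle R l := by
    refine ⟨by simp [hl], hnodup, hchain, π m, π (m + d'), hhead, hlast, ?_⟩
    rw [hm, ← Nat.add_assoc]
    exact hπ (m + d')
  -- every vertex on l has out-degree one
  have hone : ∀ v ∈ l, OutDegOne R v := by
    intro v hv
    obtain ⟨i, hi, rfl⟩ := (hmem v).1 hv
    refine ⟨π (m + i + 1), hπ (m + i), ?_⟩
    intro t ht
    by_contra hne
    exact hno ⟨l, π (m + i), ⟨hcyc, π (m + i), hv, t, π (m + i + 1), hne, ht, hπ (m + i)⟩,
      hv, hreach (m + i)⟩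
  refine ⟨m, l, ⟨hcyc, hone⟩, ?_⟩
  -- stays on l forever
  have key : ∀ k, π (m + k) ∈ l := by
    intro k
    induction k with
    | zero => exact (hmem _).2 ⟨0, Nat.succ_pos _, by simp⟩
    | succ k ih =>
      obtain ⟨i, hi, heq⟩ := (hmem _).1 ih
      obtain ⟨t, ht, huniq⟩ := hone _ ih
      have h1 : π (m + k + 1) = t := huniq _ (hπ (m + k))
      have h2 : π (m + i + 1) = t := huniq _ (by
        show R (π (m + k)) (π (m + i + 1)); rw [← heq]; exact hπ (m + i))
      have heq2 : π (m + (k + 1)) = π (m + (i + 1)) := by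
        rw [← Nat.add_assoc, ← Nat.add_assoc, h1, h2]
      rcases Nat.lt_or_ge (i + 1) (d' + 1) with h | h
      · exact (hmem _).2 ⟨i + 1, h, heq2.symm⟩
      · have : i + 1 = d' + 1 := le_antisymm hi h
        have : π (m + (i + 1)) = π m := by rw [this, ← hm]
        rw [heq2, this]
        exact (hmem _).2 ⟨0, Nat.succ_pos _, by simp⟩
  intro n hn
  obtain ⟨k, rfl⟩ := Nat.exists_eq_add_of_le hn
  exact key k
end
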